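/- arXiv:1509.05168 — 3 statements merged into one kernel-verified Lean document; each statement's English description precedes it below -/
import Mathlib

section
/- Let (K, L, c) be a weakly infeasible problem, where K ⊆ ℝ^n is an extended second order cone with exactly m Lorentz-cone blocks, L ⊆ ℝ^n a linear subspace, and c ∈ ℝ^n. Then there exist a linear subspace L' ⊆ L and a point c' ∈ L + c such that (K, L', c') is weakly infeasible and the dimension of the affine set L' + c' (i.e., dim L') is at most m. -/
open scoped RealInnerProductSpace Pointwise
open Classical

noncomputable section

/-- The Lorentz (second order) cone `SOC^{k+1} = {x = (x₀, x̄) : ‖x̄‖ ≤ x₀} ⊆ ℝ^{k+1}`. -/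
def SOC (k : ℕ) : Set (EuclideanSpace ℝ (Fin (k + 1))) :=
  {x | Real.sqrt (∑ j : Fin k, x j.succ ^ 2) ≤ x 0}

/-- The reflection `x' = (x₀, -x̄)` of `x` with respect to the Lorentz cone. -/
def reflect {k : ℕ} (x : EuclideanSpace ℝ (Fin (k + 1))) : EuclideanSpace ℝ (Fin (k + 1)) :=
  WithLp.toLp 2 (fun j => if j = 0 then x 0 else - x j)

/-- The closed half-space `H_d = {x : dᵀx ≥ 0}`. -/
def halfSpace {k : ℕ} (d : EuclideanSpace ℝ (Fin (k + 1))) :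
    Set (EuclideanSpace ℝ (Fin (k + 1))) :=
  {x | 0 ≤ ⟪d, x⟫}

/-- The ray `ray_d = {α • d : α ≥ 0}`. -/
def ray {k : ℕ} (d : EuclideanSpace ℝ (Fin (k + 1))) :
    Set (EuclideanSpace ℝ (Fin (k + 1))) :=
  {x | ∃ α : ℝ, 0 ≤ α ∧ x = α • d}

/-- A block of an extended second order cone: the trivial cone `{0}`, the whole space,
the Lorentz cone, a closed half-space `H_d` with `d ∈ SOC \ {0}`, or a ray `ray_d` with
`d ∈ SOC`. -/
def IsESOCBlock {k : ℕ} (B : Set (EuclideanSpace ℝ (Fin (k + 1)))) : Prop :=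
  B = {0} ∨ B = Set.univ ∨ B = SOC k ∨
    (∃ d ∈ SOC k, d ≠ 0 ∧ B = halfSpace d) ∨ ∃ d ∈ SOC k, B = ray d

/-- The total space `ℝ^n = ℝ^{n_1} × ⋯ × ℝ^{n_m}` with the Euclidean (ℓ²) structure. -/
abbrev TS {m : ℕ} (k : Fin m → ℕ) := PiLp 2 fun i => EuclideanSpace ℝ (Fin (k i + 1))

/-- The product cone `K = K^{n_1} × ⋯ × K^{n_m}` determined by the blocks `B i`. -/
def prodSet {m : ℕ} (k : Fin m → ℕ) (B : ∀ i, Set (EuclideanSpace ℝ (Fin (k i + 1)))) :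
    Set (TS k) :=
  {x | ∀ i, x i ∈ B i}

/-- `B` describes an extended second order cone (blockwise). -/
def IsESOC {m : ℕ} (k : Fin m → ℕ) (B : ∀ i, Set (EuclideanSpace ℝ (Fin (k i + 1)))) : Prop :=
  ∀ i, IsESOCBlock (B i)

/-- `H₁(a, K) = {i : K^{n_i} = SOC^{n_i}, a_{n_i} ∈ ri SOC^{n_i}}`. -/
def H1 {m : ℕ} (k : Fin m → ℕ) (B : ∀ i, Set (EuclideanSpace ℝ (Fin (k i + 1))))
    (a : TS k) : Set (Fin m) :=
  {i | B i = SOC (k i) ∧ a i ∈ intrinsicInterior ℝ (SOC (k i))}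

/-- `H₂(a, K) = {i : K^{n_i} = SOC^{n_i}, a_{n_i} ∈ (rel bd SOC^{n_i}) \ {0}}`. -/
def H2 {m : ℕ} (k : Fin m → ℕ) (B : ∀ i, Set (EuclideanSpace ℝ (Fin (k i + 1))))
    (a : TS k) : Set (Fin m) :=
  {i | B i = SOC (k i) ∧ a i ∈ intrinsicFrontier ℝ (SOC (k i)) ∧ a i ≠ 0}

/-- The relaxed cone `K̃` obtained from `K` and `a` (blockwise): block `i` becomes the whole
space if `i ∈ H₁(a, K)`, the half-space `H_{(a_{n_i})'}` if `i ∈ H₂(a, K)`, and is unchanged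
otherwise. -/
def relaxedBlocks {m : ℕ} (k : Fin m → ℕ) (B : ∀ i, Set (EuclideanSpace ℝ (Fin (k i + 1))))
    (a : TS k) : ∀ i, Set (EuclideanSpace ℝ (Fin (k i + 1))) :=
  fun i =>
    if i ∈ H1 k B a then Set.univ
    else if i ∈ H2 k B a then halfSpace (reflect (a i))
    else B i

/-- The affine set `L + c`. -/
def affineSet {V : Type*} [AddCommGroup V] [Module ℝ V] (L : Submodule ℝ V) (c : V) :
    Set V :=
  {x | x - c ∈ L}

/-- The distance between two sets. -/
def setDist {V : Type*} [NormedAddCommGroup V] (A B : Set V) : ℝ :=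
  sInf (Set.image2 dist A B)

/-- `(K, L, c)` is strongly feasible: `(L + c) ∩ ri K ≠ ∅`. -/
def StronglyFeasible {V : Type*} [NormedAddCommGroup V] [Module ℝ V]
    (K : Set V) (L : Submodule ℝ V) (c : V) : Prop :=
  (affineSet L c ∩ intrinsicInterior ℝ K).Nonempty

/-- `(K, L, c)` is weakly feasible: `K ∩ (L + c) ≠ ∅` but `(L + c) ∩ ri K = ∅`. -/
def WeaklyFeasible {V : Type*} [NormedAddCommGroup V] [Module ℝ V]
    (K : Set V) (L : Submodule ℝ V) (c : V) : Prop :=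
  (K ∩ affineSet L c).Nonempty ∧ affineSet L c ∩ intrinsicInterior ℝ K = ∅

/-- `(K, L, c)` is weakly infeasible: `K ∩ (L + c) = ∅` but `dist(K, L + c) = 0`. -/
def WeaklyInfeasible {V : Type*} [NormedAddCommGroup V] [Module ℝ V]
    (K : Set V) (L : Submodule ℝ V) (c : V) : Prop :=
  K ∩ affineSet L c = ∅ ∧ setDist K (affineSet L c) = 0

/-- `(K, L, c)` is strongly infeasible: `K ∩ (L + c) = ∅` and `dist(K, L + c) > 0`. -/
def StronglyInfeasible {V : Type*} [NormedAddCommGroup V] [Module ℝ V]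
    (K : Set V) (L : Submodule ℝ V) (c : V) : Prop :=
  K ∩ affineSet L c = ∅ ∧ 0 < setDist K (affineSet L c)

/-- `(K, L, c)` is in weak status: weakly feasible or weakly infeasible. -/
def WeakStatus {V : Type*} [NormedAddCommGroup V] [Module ℝ V]
    (K : Set V) (L : Submodule ℝ V) (c : V) : Prop :=
  WeaklyFeasible K L c ∨ WeaklyInfeasible K L c

namespace WIP

variable {n : ℕ}

def tl (x : EuclideanSpace ℝ (Fin (n + 1))) : EuclideanSpace ℝ (Fin n) :=
  WithLp.toLp 2 (fun j : Fin n => x j.succ)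

lemma tl_add (x y : EuclideanSpace ℝ (Fin (n + 1))) : tl (x + y) = tl x + tl y := by
  ext j; simp [tl]

lemma tl_smul (t : ℝ) (x : EuclideanSpace ℝ (Fin (n + 1))) : tl (t • x) = t • tl x := by
  ext j; simp [tl]

lemma norm_tl (x : EuclideanSpace ℝ (Fin (n + 1))) :
    ‖tl x‖ = Real.sqrt (∑ j : Fin n, x j.succ ^ 2) := by
  rw [EuclideanSpace.norm_eq]
  congr 1
  refine Finset.sum_congr rfl fun j _ => ?_
  rw [Real.norm_eq_abs, sq_abs]; rfl

lemma mem_SOC_iff (x : EuclideanSpace ℝ (Fin (n + 1))) : x ∈ SOC n ↔ ‖tl x‖ ≤ x 0 := by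
  rw [norm_tl]; rfl

lemma inner_split (a x : EuclideanSpace ℝ (Fin (n + 1))) :
    ⟪a, x⟫ = a 0 * x 0 + ⟪tl a, tl x⟫ := by
  simp only [PiLp.inner_apply, RCLike.inner_apply, conj_trivial]
  rw [Fin.sum_univ_succ]
  simp only [tl, WithLp.ofLp_toLp]; ring

lemma reflect_apply_zero (x : EuclideanSpace ℝ (Fin (n + 1))) : reflect x 0 = x 0 := by
  simp [reflect]

lemma tl_reflect (x : EuclideanSpace ℝ (Fin (n + 1))) : tl (reflect x) = - tl x := by
  ext j
  simp [reflect, tl, Fin.succ_ne_zero]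

lemma SOC_zero_mem : (0 : EuclideanSpace ℝ (Fin (n + 1))) ∈ SOC n := by
  simp [SOC]

lemma SOC_add_mem {x y : EuclideanSpace ℝ (Fin (n + 1))} (hx : x ∈ SOC n) (hy : y ∈ SOC n) :
    x + y ∈ SOC n := by
  rw [mem_SOC_iff] at *
  calc ‖tl (x + y)‖ = ‖tl x + tl y‖ := by rw [tl_add]
    _ ≤ ‖tl x‖ + ‖tl y‖ := norm_add_le _ _
    _ ≤ x 0 + y 0 := add_le_add hx hy
    _ = (x + y) 0 := rfl

lemma SOC_smul_mem {x : EuclideanSpace ℝ (Fin (n + 1))} {t : ℝ} (ht : 0 ≤ t) (hx : x ∈ SOC n) :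
    t • x ∈ SOC n := by
  rw [mem_SOC_iff] at *
  rw [tl_smul, norm_smul, Real.norm_eq_abs, abs_of_nonneg ht]
  calc t * ‖tl x‖ ≤ t * x 0 := by nlinarith
    _ = (t • x) 0 := rfl

lemma SOC_pos_of_ne_zero {x : EuclideanSpace ℝ (Fin (n + 1))} (hx : x ∈ SOC n) (hne : x ≠ 0) :
    0 < x 0 := by
  rw [mem_SOC_iff] at hx
  rcases lt_or_eq_of_le (le_trans (norm_nonneg _) hx) with h | h
  · exact h
  · exfalso; apply hne
    have htl : ‖tl x‖ = 0 := le_antisymm (h ▸ hx) (norm_nonneg _)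
    ext j
    refine Fin.cases ?_ (fun i => ?_) j
    · exact h.symm
    · have := norm_eq_zero.mp htl
      simpa [tl] using congrArg (fun v => v.ofLp i) this

lemma reflect_mem_SOC {x : EuclideanSpace ℝ (Fin (n + 1))} (hx : x ∈ SOC n) :
    reflect x ∈ SOC n := by
  rw [mem_SOC_iff] at *
  rw [tl_reflect, norm_neg, reflect_apply_zero]; exact hx

lemma reflect_ne_zero {x : EuclideanSpace ℝ (Fin (n + 1))} (hx : x ≠ 0) : reflect x ≠ 0 := by
  intro h
  apply hx
  ext j
  refine Fin.cases ?_ (fun i => ?_) j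
  · have := congrArg (fun v => v.ofLp 0) h; simpa [reflect] using this
  · have := congrArg (fun v => v.ofLp i.succ) h
    simp only [reflect, WithLp.ofLp_toLp, Fin.succ_ne_zero, if_false] at this
    have : -(x i.succ) = 0 := this
    simpa [neg_eq_zero] using this

lemma inner_reflect_nonneg {a x : EuclideanSpace ℝ (Fin (n + 1))} (ha : a ∈ SOC n)
    (hx : x ∈ SOC n) : 0 ≤ ⟪reflect a, x⟫ := by
  rw [inner_split, reflect_apply_zero, tl_reflect]
  rw [mem_SOC_iff] at ha hx
  have h1 : ⟪tl a, tl x⟫ ≤ ‖tl a‖ * ‖tl x‖ := real_inner_le_norm _ _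
  have h2 : ‖tl a‖ * ‖tl x‖ ≤ a 0 * x 0 :=
    mul_le_mul ha hx (norm_nonneg _) (le_trans (norm_nonneg _) ha)
  have : ⟪-tl a, tl x⟫ = - ⟪tl a, tl x⟫ := inner_neg_left _ _
  rw [this]; linarith

lemma isClosed_SOC : IsClosed (SOC n) := by
  have : SOC n = {x : EuclideanSpace ℝ (Fin (n + 1)) |
      Real.sqrt (∑ j : Fin n, x j.succ ^ 2) ≤ x 0} := rfl
  rw [this]
  apply isClosed_le
  · exact (Real.continuous_sqrt.comp (by
      apply continuous_finset_sum
      intro j _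
      exact ((continuous_apply j.succ).comp (PiLp.continuous_ofLp 2 _)).pow 2))
  · exact (continuous_apply (0 : Fin (n+1))).comp (PiLp.continuous_ofLp 2 _)

/-! ### Approaches and setDist -/

def Approaches {V : Type*} [NormedAddCommGroup V] (K S : Set V) : Prop :=
  ∀ ε > 0, ∃ x ∈ K, ∃ y ∈ S, dist x y < ε

lemma bddBelow_image2_dist {V : Type*} [NormedAddCommGroup V] (K S : Set V) :
    BddBelow (Set.image2 dist K S) := by
  refine ⟨0, fun z hz => ?_⟩
  rcases hz with ⟨x, _, y, _, rfl⟩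
  exact dist_nonneg

lemma setDist_eq_zero_of_approaches {V : Type*} [NormedAddCommGroup V] {K S : Set V}
    (h : Approaches K S) : setDist K S = 0 := by
  refine le_antisymm ?_ (Real.sInf_nonneg fun z hz => by
    rcases hz with ⟨x, _, y, _, rfl⟩; exact dist_nonneg)
  by_contra hlt
  push_neg at hlt
  obtain ⟨x, hx, y, hy, hd⟩ := h _ hlt
  have : setDist K S ≤ dist x y := csInf_le (bddBelow_image2_dist K S) ⟨x, hx, y, hy, rfl⟩
  linarith

lemma approaches_of_setDist_eq_zero {V : Type*} [NormedAddCommGroup V] {K S : Set V}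
    (hK : K.Nonempty) (hS : S.Nonempty) (h : setDist K S = 0) : Approaches K S := by
  intro ε hε
  have hne : (Set.image2 dist K S).Nonempty := ⟨dist hK.choose hS.choose,
    hK.choose, hK.choose_spec, hS.choose, hS.choose_spec, rfl⟩
  have : sInf (Set.image2 dist K S) < ε := by rw [show sInf (Set.image2 dist K S) = setDist K S from rfl, h]; exact hε
  obtain ⟨z, hz, hzlt⟩ := exists_lt_of_csInf_lt hne this
  rcases hz with ⟨x, hx, y, hy, rfl⟩
  exact ⟨x, hx, y, hy, hzlt⟩

/-! ### affineSet lemmas -/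

lemma mem_affineSet_self {V : Type*} [AddCommGroup V] [Module ℝ V] (L : Submodule ℝ V)
    (c : V) : c ∈ affineSet L c := by
  simp [affineSet]

lemma affineSet_subset {V : Type*} [AddCommGroup V] [Module ℝ V] {L' L : Submodule ℝ V}
    {c' c : V} (hle : L' ≤ L) (hc' : c' ∈ affineSet L c) :
    affineSet L' c' ⊆ affineSet L c := by
  intro x hx
  have h1 : x - c' ∈ L := hle hx
  have h2 : c' - c ∈ L := hc'
  have heq : x - c = (x - c') + (c' - c) := by abel
  show x - c ∈ L
  rw [heq]
  exact L.add_mem h1 h2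

end WIP
namespace WIP

lemma mem_affineSet_iff {V : Type*} [AddCommGroup V] [Module ℝ V] {L : Submodule ℝ V}
    {c x : V} : x ∈ affineSet L c ↔ x - c ∈ L := Iff.rfl

lemma isClosed_affineSet {V : Type*} [NormedAddCommGroup V] [NormedSpace ℝ V]
    [FiniteDimensional ℝ V] (L : Submodule ℝ V) (c : V) : IsClosed (affineSet L c) := by
  have : affineSet L c = (fun x => x - c) ⁻¹' (L : Set V) := rfl
  rw [this]
  exact (Submodule.closed_of_finiteDimensional L).preimage (continuous_id.sub continuous_const)

lemma one_div_mono {j n : ℕ} (h : n ≤ j) : (1 : ℝ) / (j + 1) ≤ 1 / (n + 1) := by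
  apply one_div_le_one_div_of_le
  · positivity
  · exact_mod_cast Nat.succ_le_succ h

section lemB

variable {m : ℕ} {k : Fin m → ℕ}

def Cset (soc : Fin m → Prop) (U : ∀ i, Submodule ℝ (EuclideanSpace ℝ (Fin (k i + 1))))
    (r : ∀ i, EuclideanSpace ℝ (Fin (k i + 1))) : Set (TS k) :=
  {x | ∀ i, (soc i → x i ∈ SOC (k i)) ∧ (¬ soc i → x i ∈ U i ∧ 0 ≤ ⟪r i, x i⟫)}

lemma continuous_eval (i : Fin m) : Continuous fun x : TS k => x i :=
  (continuous_apply i).comp (PiLp.continuous_ofLp 2 _)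

lemma Cset_closed (soc : Fin m → Prop) (U : ∀ i, Submodule ℝ (EuclideanSpace ℝ (Fin (k i + 1))))
    (r : ∀ i, EuclideanSpace ℝ (Fin (k i + 1))) : IsClosed (Cset soc U r) := by
  have heq : Cset soc U r = ⋂ i, {x : TS k |
      (soc i → x i ∈ SOC (k i)) ∧ (¬ soc i → x i ∈ U i ∧ 0 ≤ ⟪r i, x i⟫)} := by
    ext x; simp [Cset, Set.mem_iInter]
  rw [heq]
  refine isClosed_iInter fun i => ?_
  by_cases h : soc i
  · have heq2 : {x : TS k | (soc i → x i ∈ SOC (k i)) ∧ (¬ soc i → x i ∈ U i ∧ 0 ≤ ⟪r i, x i⟫)}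
        = (fun x : TS k => x i) ⁻¹' (SOC (k i)) := by
      ext x; simp [h]
    rw [heq2]; exact isClosed_SOC.preimage (continuous_eval i)
  · have heq2 : {x : TS k | (soc i → x i ∈ SOC (k i)) ∧ (¬ soc i → x i ∈ U i ∧ 0 ≤ ⟪r i, x i⟫)}
        = (fun x : TS k => x i) ⁻¹' ((U i : Set _) ∩ {v | 0 ≤ ⟪r i, v⟫}) := by
      ext x; simp [h]
    rw [heq2]
    refine IsClosed.preimage (continuous_eval i) (IsClosed.inter
      (Submodule.closed_of_finiteDimensional _) ?_)
    exact isClosed_le continuous_const (Continuous.inner continuous_const continuous_id)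

lemma Cset_smul_mem {soc : Fin m → Prop} {U : ∀ i, Submodule ℝ (EuclideanSpace ℝ (Fin (k i + 1)))}
    {r : ∀ i, EuclideanSpace ℝ (Fin (k i + 1))} {x : TS k} (hx : x ∈ Cset soc U r) {t : ℝ}
    (ht : 0 ≤ t) : t • x ∈ Cset soc U r := by
  intro i
  obtain ⟨h1, h2⟩ := hx i
  refine ⟨fun hs => ?_, fun hs => ?_⟩
  · show t • x i ∈ SOC (k i)
    exact SOC_smul_mem ht (h1 hs)
  · obtain ⟨hU, hr⟩ := h2 hs
    refine ⟨(U i).smul_mem t hU, ?_⟩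
    show 0 ≤ ⟪r i, t • x i⟫
    rw [inner_smul_right]
    exact mul_nonneg ht hr

def rnext (r : ∀ i, EuclideanSpace ℝ (Fin (k i + 1))) (d : TS k) :
    ∀ i, EuclideanSpace ℝ (Fin (k i + 1)) :=
  fun i => if ⟪r i, d i⟫ = 0 then r i else 0

lemma mem_rnext_of_mem {soc : Fin m → Prop} {U : ∀ i, Submodule ℝ (EuclideanSpace ℝ (Fin (k i + 1)))}
    {r : ∀ i, EuclideanSpace ℝ (Fin (k i + 1))} {d : TS k}
    (hd0 : ∀ i, soc i → d i = 0) (x : TS k) (hx : x ∈ Cset soc U r) (t : ℝ)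
    (hd : d ∈ Cset soc U r) : x - t • d ∈ Cset soc U (rnext r d) := by
  intro i
  obtain ⟨h1, h2⟩ := hx i
  refine ⟨fun hs => ?_, fun hs => ?_⟩
  · show x i - t • d i ∈ SOC (k i)
    rw [hd0 i hs, smul_zero, sub_zero]
    exact h1 hs
  · obtain ⟨hU, hr⟩ := h2 hs
    refine ⟨(U i).sub_mem hU ((U i).smul_mem t ((hd i).2 hs).1), ?_⟩
    show 0 ≤ ⟪rnext r d i, x i - t • d i⟫
    by_cases hrd : ⟪r i, d i⟫ = 0
    · rw [rnext, if_pos hrd, inner_sub_right, inner_smul_right, hrd]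
      simpa using hr
    · rw [rnext, if_neg hrd, inner_zero_left]

lemma exists_shift {soc : Fin m → Prop} {U : ∀ i, Submodule ℝ (EuclideanSpace ℝ (Fin (k i + 1)))}
    {r : ∀ i, EuclideanSpace ℝ (Fin (k i + 1))} {d : TS k}
    (hd : d ∈ Cset soc U r) (hd0 : ∀ i, soc i → d i = 0) (a : TS k)
    (ha : a ∈ Cset soc U (rnext r d)) : ∃ τ : ℝ, ∀ t, τ ≤ t → a + t • d ∈ Cset soc U r := by
  classical
  set g : Fin m → ℝ := fun i => if h : 0 < ⟪r i, d i⟫ then -⟪r i, a i⟫ / ⟪r i, d i⟫ else 0 with hg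
  refine ⟨(insert (0 : ℝ) (Finset.univ.image g)).max' (Finset.insert_nonempty _ _), fun t ht i => ?_⟩
  have htg : ∀ i, g i ≤ t := fun i => le_trans (Finset.le_max' _ _
    (Finset.mem_insert_of_mem (Finset.mem_image_of_mem g (Finset.mem_univ i)))) ht
  obtain ⟨h1, h2⟩ := ha i
  refine ⟨fun hs => ?_, fun hs => ?_⟩
  · show a i + t • d i ∈ SOC (k i)
    rw [hd0 i hs, smul_zero, add_zero]
    exact h1 hs
  · obtain ⟨hU, hr⟩ := h2 hs
    refine ⟨(U i).add_mem hU ((U i).smul_mem t ((hd i).2 hs).1), ?_⟩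
    show 0 ≤ ⟪r i, a i + t • d i⟫
    rw [inner_add_right, inner_smul_right]
    have hrd : 0 ≤ ⟪r i, d i⟫ := ((hd i).2 hs).2
    rcases eq_or_lt_of_le hrd with heq | hpos
    · have h4 : ⟪rnext r d i, a i⟫ = ⟪r i, a i⟫ := by rw [rnext, if_pos heq.symm]
      rw [← heq, mul_zero, add_zero, ← h4]
      exact hr
    · have hgi : g i = -⟪r i, a i⟫ / ⟪r i, d i⟫ := by
        show (if h : 0 < ⟪r i, d i⟫ then -⟪r i, a i⟫ / ⟪r i, d i⟫ else 0) = _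
        rw [dif_pos hpos]
      have := htg i
      rw [hgi] at this
      have h3 : -⟪r i, a i⟫ ≤ t * ⟪r i, d i⟫ := by
        rw [div_le_iff₀ hpos] at this
        linarith
      linarith

lemma lemB (soc : Fin m → Prop) (U : ∀ i, Submodule ℝ (EuclideanSpace ℝ (Fin (k i + 1)))) :
    ∀ (N : ℕ) (r : ∀ i, EuclideanSpace ℝ (Fin (k i + 1))) (L : Submodule ℝ (TS k)) (c : TS k),
      Module.finrank ℝ L = N →
      (∀ a, a ∈ Cset soc U r → a ∈ L → ∀ i, soc i → a i = 0) →
      Approaches (Cset soc U r) (affineSet L c) →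
      (Cset soc U r ∩ affineSet L c).Nonempty := by
  intro N
  induction N using Nat.strongRecOn with
  | _ N IH =>
  intro r L c hN Hyp happ
  have hseq : ∀ j : ℕ, ∃ x ∈ Cset soc U r, ∃ y ∈ affineSet L c, dist x y < 1 / (j + 1) :=
    fun j => happ _ (by positivity)
  choose xs hxs ys hys hdist using hseq
  by_cases hbdd : ∃ M : ℝ, ∀ N₀ : ℕ, ∃ j, N₀ ≤ j ∧ ‖ys j‖ ≤ M
  · -- bounded case
    obtain ⟨M, hM⟩ := hbdd
    choose φ hφ1 hφ2 using hM
    have hball : ∀ n, ys (φ n) ∈ Metric.closedBall (0 : TS k) M :=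
      fun n => mem_closedBall_zero_iff.mpr (hφ2 n)
    obtain ⟨y0, _, ψ, hψ, htend⟩ := (isCompact_closedBall (0 : TS k) M).tendsto_subseq hball
    have key : Filter.Tendsto (fun n => dist (xs (φ (ψ n))) (ys (φ (ψ n)))) Filter.atTop (nhds 0) := by
      apply squeeze_zero (fun n => dist_nonneg) (g := fun n : ℕ => (1:ℝ)/(n+1))
        (fun n => le_of_lt (lt_of_lt_of_le (hdist _) (one_div_mono (le_trans (hψ.le_apply) (hφ1 _)))))
      exact tendsto_one_div_add_atTop_nhds_zero_nat
    have hxgo : Filter.Tendsto (fun n => xs (φ (ψ n))) Filter.atTop (nhds y0) := by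
      rw [tendsto_iff_dist_tendsto_zero]
      apply squeeze_zero (fun n => dist_nonneg)
        (g := fun n => dist (xs (φ (ψ n))) (ys (φ (ψ n))) + dist (ys (φ (ψ n))) y0)
        (fun n => dist_triangle _ _ _)
      have h2 := tendsto_iff_dist_tendsto_zero.mp htend
      simpa using key.add h2
    have hy0C : y0 ∈ Cset soc U r := (Cset_closed soc U r).mem_of_tendsto hxgo
      (Filter.Eventually.of_forall fun n => hxs _)
    have hy0A : y0 ∈ affineSet L c := (isClosed_affineSet L c).mem_of_tendsto htend
      (Filter.Eventually.of_forall fun n => hys _)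
    exact ⟨y0, hy0C, hy0A⟩
  · -- unbounded case
    push_neg at hbdd
    choose Nf hNf using hbdd
    set σ : ℕ → ℕ := fun n => max (Nf ((n : ℝ) + 1)) (n + 1) with hσ
    have hσ1 : ∀ n : ℕ, ((n : ℝ) + 1) < ‖ys (σ n)‖ := fun n => hNf _ _ (le_max_left _ _)
    have hσ2 : ∀ n : ℕ, n + 1 ≤ σ n := fun n => le_max_right _ _
    have hpos : ∀ n, 0 < ‖ys (σ n)‖ := fun n => lt_trans (by positivity) (hσ1 n)
    have hinvle : ∀ n : ℕ, ‖ys (σ n)‖⁻¹ ≤ 1 / ((n : ℝ) + 1) := by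
      intro n
      rw [one_div]
      exact inv_anti₀ (by positivity) (hσ1 n).le
    set us : ℕ → TS k := fun n => ‖ys (σ n)‖⁻¹ • ys (σ n) with hus
    have husph : ∀ n, us n ∈ Metric.sphere (0 : TS k) 1 := by
      intro n
      rw [mem_sphere_zero_iff_norm, hus]
      simp only [norm_smul, norm_inv, norm_norm]
      exact inv_mul_cancel₀ (hpos n).ne'
    obtain ⟨d, hdsph, ψ, hψ, htend⟩ := (isCompact_sphere (0 : TS k) 1).tendsto_subseq husph
    have hdn : ‖d‖ = 1 := mem_sphere_zero_iff_norm.mp hdsph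
    have hvtend : Filter.Tendsto (fun n => ‖ys (σ (ψ n))‖⁻¹ • xs (σ (ψ n)))
        Filter.atTop (nhds d) := by
      rw [tendsto_iff_dist_tendsto_zero]
      apply squeeze_zero (fun n => dist_nonneg)
        (g := fun n => (1:ℝ)/(n+1) + dist (us (ψ n)) d)
      · intro n
        refine le_trans (dist_triangle _ (us (ψ n)) d) (add_le_add ?_ le_rfl)
        rw [hus]
        rw [dist_smul₀]
        have h1 : dist (xs (σ (ψ n))) (ys (σ (ψ n))) ≤ 1 / ((ψ n : ℝ) + 1) :=
          le_of_lt (lt_of_lt_of_le (hdist _) (one_div_mono (le_trans (Nat.le_succ _) (hσ2 _))))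
        have h2 : ‖(‖ys (σ (ψ n))‖⁻¹ : ℝ)‖ ≤ 1 := by
          rw [Real.norm_eq_abs, abs_of_nonneg (inv_nonneg.mpr (hpos _).le)]
          exact le_trans (hinvle _) (by
            rw [div_le_one (by positivity)]
            linarith [(ψ n).cast_nonneg (α := ℝ)])
        calc ‖(‖ys (σ (ψ n))‖⁻¹ : ℝ)‖ * dist (xs (σ (ψ n))) (ys (σ (ψ n)))
            ≤ 1 * (1 / ((ψ n : ℝ) + 1)) := by
              apply mul_le_mul h2 h1 dist_nonneg zero_le_one
          _ = 1 / ((ψ n : ℝ) + 1) := one_mul _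
          _ ≤ 1 / ((n : ℝ) + 1) := one_div_mono hψ.le_apply
      · have h2 := tendsto_iff_dist_tendsto_zero.mp htend
        simpa using Filter.Tendsto.add tendsto_one_div_add_atTop_nhds_zero_nat h2
    have hdC : d ∈ Cset soc U r := (Cset_closed soc U r).mem_of_tendsto hvtend
      (Filter.Eventually.of_forall fun n => Cset_smul_mem (hxs _) (inv_nonneg.mpr (hpos _).le))
    have hinvtend : Filter.Tendsto (fun n => ‖ys (σ (ψ n))‖⁻¹) Filter.atTop (nhds 0) := by
      apply squeeze_zero (fun n => inv_nonneg.mpr (hpos _).le)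
        (g := fun n : ℕ => (1:ℝ)/(n+1))
        (fun n => le_trans (hinvle _) (one_div_mono hψ.le_apply))
      exact tendsto_one_div_add_atTop_nhds_zero_nat
    have hwtend : Filter.Tendsto (fun n => ‖ys (σ (ψ n))‖⁻¹ • (ys (σ (ψ n)) - c))
        Filter.atTop (nhds d) := by
      have heq : (fun n => ‖ys (σ (ψ n))‖⁻¹ • (ys (σ (ψ n)) - c))
          = fun n => us (ψ n) - ‖ys (σ (ψ n))‖⁻¹ • c := by
        funext n; rw [hus]; simp [smul_sub]
      rw [heq]
      have := htend.sub (hinvtend.smul_const c)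
      simpa using this
    have hdL : d ∈ L := (Submodule.closed_of_finiteDimensional L).mem_of_tendsto hwtend
      (Filter.Eventually.of_forall fun n => L.smul_mem _ (hys _))
    have hd0 : ∀ i, soc i → d i = 0 := Hyp d hdC hdL
    set L₁ := L ⊓ (Submodule.span ℝ {d})ᗮ with hL₁
    have hL1le : L₁ ≤ L := inf_le_left
    have hdd : ⟪d, d⟫ = 1 := by rw [real_inner_self_eq_norm_sq, hdn]; norm_num
    have hdnotin : d ∉ L₁ := by
      intro h
      have h2 := Submodule.mem_orthogonal_singleton_iff_inner_right.mp h.2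
      rw [hdd] at h2; norm_num at h2
    have hlt : L₁ < L := lt_of_le_of_ne hL1le (fun h => hdnotin (h ▸ hdL))
    have hrk : Module.finrank ℝ L₁ < N := hN ▸ Submodule.finrank_lt_finrank_of_lt hlt
    have hdec : ∀ y ∈ affineSet L c, y - ⟪d, y - c⟫ • d ∈ affineSet L₁ c := by
      intro y hy
      rw [mem_affineSet_iff]
      have h1 : y - ⟪d, y - c⟫ • d - c = (y - c) - ⟪d, y - c⟫ • d := by abel
      rw [h1]
      refine Submodule.mem_inf.mpr ⟨L.sub_mem hy (L.smul_mem _ hdL), ?_⟩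
      rw [Submodule.mem_orthogonal_singleton_iff_inner_right, inner_sub_right,
        inner_smul_right, hdd]
      ring
    have happ₁ : Approaches (Cset soc U (rnext r d)) (affineSet L₁ c) := by
      intro ε hε
      obtain ⟨x, hx, y, hy, hxy⟩ := happ ε hε
      refine ⟨x - ⟪d, y - c⟫ • d, mem_rnext_of_mem hd0 x hx _ hdC,
        y - ⟪d, y - c⟫ • d, hdec y hy, ?_⟩
      rw [dist_sub_right]
      exact hxy
    have Hyp₁ : ∀ a, a ∈ Cset soc U (rnext r d) → a ∈ L₁ → ∀ i, soc i → a i = 0 := by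
      intro a ha haL i hs
      obtain ⟨τ, hτ⟩ := exists_shift hdC hd0 a ha
      have hmem : a + τ • d ∈ Cset soc U r := hτ τ le_rfl
      have hL' : a + τ • d ∈ L := L.add_mem (hL1le haL) (L.smul_mem _ hdL)
      have h0 : a i + τ • d i = 0 := Hyp _ hmem hL' i hs
      rw [hd0 i hs, smul_zero, add_zero] at h0
      exact h0
    obtain ⟨z, hzC, hzA⟩ := IH _ hrk (rnext r d) L₁ c rfl Hyp₁ happ₁
    obtain ⟨τ, hτ⟩ := exists_shift hdC hd0 z hzC
    refine ⟨z + τ • d, hτ τ le_rfl, ?_⟩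
    rw [mem_affineSet_iff]
    have h1 : z + τ • d - c = (z - c) + τ • d := by abel
    rw [h1]
    exact L.add_mem (hL1le hzA) (L.smul_mem _ hdL)

end lemB

end WIP
namespace WIP

section repr

variable {m : ℕ} {k : Fin m → ℕ}

lemma block_repr {n : ℕ} {Bi : Set (EuclideanSpace ℝ (Fin (n + 1)))} (h : IsESOCBlock Bi)
    (hnot : Bi ≠ SOC n) :
    ∃ (Ui : Submodule ℝ (EuclideanSpace ℝ (Fin (n + 1))))
      (ri : EuclideanSpace ℝ (Fin (n + 1))), Bi = {v | v ∈ Ui ∧ 0 ≤ ⟪ri, v⟫} := by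
  rcases h with h | h | h | ⟨d, _, _, h⟩ | ⟨d, _, h⟩
  · refine ⟨⊥, 0, ?_⟩
    rw [h]; ext v
    simp [Submodule.mem_bot, inner_zero_left]
  · refine ⟨⊤, 0, ?_⟩
    rw [h]; ext v
    simp [inner_zero_left]
  · exact absurd h hnot
  · refine ⟨⊤, d, ?_⟩
    rw [h]; ext v
    simp [halfSpace]
  · by_cases hd : d = 0
    · refine ⟨⊥, 0, ?_⟩
      rw [h, hd]; ext v
      simp only [ray, Set.mem_setOf_eq, smul_zero, Set.mem_setOf_eq]
      constructor
      · rintro ⟨α, _, rfl⟩; simp [Submodule.mem_bot, inner_zero_left]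
      · rintro ⟨hv, _⟩
        exact ⟨0, le_rfl, by simpa [Submodule.mem_bot] using hv⟩
    · refine ⟨Submodule.span ℝ {d}, d, ?_⟩
      rw [h]; ext v
      constructor
      · rintro ⟨α, hα, rfl⟩
        refine ⟨Submodule.mem_span_singleton.mpr ⟨α, rfl⟩, ?_⟩
        rw [inner_smul_right, real_inner_self_eq_norm_sq]
        exact mul_nonneg hα (by positivity)
      · rintro ⟨hv, hiv⟩
        obtain ⟨α, rfl⟩ := Submodule.mem_span_singleton.mp hv
        refine ⟨α, ?_, rfl⟩
        rw [inner_smul_right, real_inner_self_eq_norm_sq] at hiv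
        have hd2 : (0:ℝ) < ‖d‖ ^ 2 := by
          have hdp : (0:ℝ) < ‖d‖ := norm_pos_iff.mpr hd
          positivity
        nlinarith

lemma prodSet_repr {B : ∀ i, Set (EuclideanSpace ℝ (Fin (k i + 1)))} (hB : IsESOC k B) :
    ∃ (U : ∀ i, Submodule ℝ (EuclideanSpace ℝ (Fin (k i + 1))))
      (r : ∀ i, EuclideanSpace ℝ (Fin (k i + 1))),
      prodSet k B = Cset (fun i => B i = SOC (k i)) U r := by
  have h : ∀ i, ∃ (Ui : Submodule ℝ (EuclideanSpace ℝ (Fin (k i + 1))))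
      (ri : EuclideanSpace ℝ (Fin (k i + 1))),
      ¬(B i = SOC (k i)) → B i = {v | v ∈ Ui ∧ 0 ≤ ⟪ri, v⟫} := by
    intro i
    by_cases hs : B i = SOC (k i)
    · exact ⟨⊥, 0, fun h' => absurd hs h'⟩
    · obtain ⟨Ui, ri, hrep⟩ := block_repr (hB i) hs
      exact ⟨Ui, ri, fun _ => hrep⟩
  choose U r hUr using h
  refine ⟨U, r, ?_⟩
  ext x
  constructor
  · intro hx i
    refine ⟨fun hs => hs ▸ hx i, fun hs => ?_⟩
    have h2 := hx i
    rw [hUr i hs] at h2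
    exact h2
  · intro hx
    intro i
    by_cases hs : B i = SOC (k i)
    · rw [hs]; exact (hx i).1 hs
    · rw [hUr i hs]; exact (hx i).2 hs

lemma exists_direction {B : ∀ i, Set (EuclideanSpace ℝ (Fin (k i + 1)))} (hB : IsESOC k B)
    (L : Submodule ℝ (TS k)) (c : TS k)
    (hdisj : prodSet k B ∩ affineSet L c = ∅)
    (happ : Approaches (prodSet k B) (affineSet L c)) :
    ∃ a, a ∈ prodSet k B ∧ a ∈ L ∧ ∃ i, B i = SOC (k i) ∧ a i ≠ 0 := by
  by_contra hcontra
  have hcon : ∀ a, a ∈ prodSet k B → a ∈ L → ∀ i, B i = SOC (k i) → a i = 0 := by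
    intro a ha haL i hi
    by_contra hne
    exact hcontra ⟨a, ha, haL, i, hi, hne⟩
  obtain ⟨U, r, hrep⟩ := prodSet_repr hB
  have hne := lemB (fun i => B i = SOC (k i)) U (Module.finrank ℝ L) r L c rfl
    (by rw [← hrep]; exact hcon) (by rw [← hrep]; exact happ)
  rw [← hrep] at hne
  obtain ⟨z, hz⟩ := hne
  rw [hdisj] at hz
  exact hz

end repr

end WIP
namespace WIP

section relax

variable {m : ℕ} {k : Fin m → ℕ}

def relaxB (B : ∀ i, Set (EuclideanSpace ℝ (Fin (k i + 1)))) (a : TS k) :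
    ∀ i, Set (EuclideanSpace ℝ (Fin (k i + 1))) :=
  fun i => if B i = SOC (k i) ∧ a i ≠ 0 then
    (if ‖tl (a i)‖ < a i 0 then Set.univ else halfSpace (reflect (a i))) else B i

lemma block_zero_mem {n : ℕ} {Bi : Set (EuclideanSpace ℝ (Fin (n + 1)))}
    (h : IsESOCBlock Bi) : 0 ∈ Bi := by
  rcases h with h | h | h | ⟨d, hd, hdn, h⟩ | ⟨d, hd, h⟩ <;> subst h
  · rfl
  · trivial
  · exact SOC_zero_mem
  · show (0:ℝ) ≤ ⟪d, 0⟫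
    rw [inner_zero_right]
  · exact ⟨0, le_rfl, (zero_smul ℝ d).symm⟩

lemma block_add_smul {n : ℕ} {Bi : Set (EuclideanSpace ℝ (Fin (n + 1)))} (h : IsESOCBlock Bi)
    {x a : EuclideanSpace ℝ (Fin (n + 1))} (hx : x ∈ Bi) (ha : a ∈ Bi) {t : ℝ} (ht : 0 ≤ t) :
    x + t • a ∈ Bi := by
  rcases h with h | h | h | ⟨d, hd, hdn, h⟩ | ⟨d, hd, h⟩ <;> subst h
  · rw [Set.mem_singleton_iff] at hx ha ⊢
    rw [hx, ha, smul_zero, add_zero]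
  · trivial
  · exact SOC_add_mem hx (SOC_smul_mem ht ha)
  · show (0:ℝ) ≤ ⟪d, x + t • a⟫
    rw [inner_add_right, inner_smul_right]
    have h1 : (0:ℝ) ≤ ⟪d, x⟫ := hx
    have h2 : (0:ℝ) ≤ ⟪d, a⟫ := ha
    nlinarith
  · obtain ⟨α, hα, rfl⟩ := hx
    obtain ⟨β, hβ, rfl⟩ := ha
    exact ⟨α + t * β, by nlinarith, by rw [smul_smul, ← add_smul]⟩

lemma zero_mem_prodSet {B : ∀ i, Set (EuclideanSpace ℝ (Fin (k i + 1)))} (hB : IsESOC k B) :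
    (0 : TS k) ∈ prodSet k B :=
  fun i => block_zero_mem (hB i)

lemma relax_isESOC {B : ∀ i, Set (EuclideanSpace ℝ (Fin (k i + 1)))} {a : TS k}
    (hB : IsESOC k B) (ha : a ∈ prodSet k B) : IsESOC k (relaxB B a) := by
  intro i
  unfold relaxB
  split_ifs with h1 h2
  · exact Or.inr (Or.inl rfl)
  · have haS : a i ∈ SOC (k i) := h1.1 ▸ ha i
    exact Or.inr (Or.inr (Or.inr (Or.inl
      ⟨reflect (a i), reflect_mem_SOC haS, reflect_ne_zero h1.2, rfl⟩)))
  · exact hB i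

lemma subset_relax {B : ∀ i, Set (EuclideanSpace ℝ (Fin (k i + 1)))} {a : TS k}
    (ha : a ∈ prodSet k B) : prodSet k B ⊆ prodSet k (relaxB B a) := by
  intro x hx i
  show x i ∈ relaxB B a i
  unfold relaxB
  split_ifs with h1 h2
  · trivial
  · have haS : a i ∈ SOC (k i) := h1.1 ▸ ha i
    have hxS : x i ∈ SOC (k i) := h1.1 ▸ hx i
    exact inner_reflect_nonneg haS hxS
  · exact hx i

lemma relax_ne_SOC {B : ∀ i, Set (EuclideanSpace ℝ (Fin (k i + 1)))} {a : TS k}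
    (ha : a ∈ prodSet k B) {i : Fin m} (h1 : B i = SOC (k i) ∧ a i ≠ 0) :
    relaxB B a i ≠ SOC (k i) := by
  unfold relaxB
  rw [if_pos h1]
  have haS : a i ∈ SOC (k i) := h1.1 ▸ ha i
  split_ifs with h2
  · intro heq
    have hw : (WithLp.toLp 2 (fun _ => (-1:ℝ)) : EuclideanSpace ℝ (Fin (k i + 1))) ∈ SOC (k i) :=
      heq ▸ Set.mem_univ _
    rw [mem_SOC_iff] at hw
    have h3 := norm_nonneg (tl ((WithLp.toLp 2 (fun _ => (-1:ℝ)) : EuclideanSpace ℝ (Fin (k i + 1)))))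
    linarith
  · intro heq
    have ha00 : 0 < a i 0 := SOC_pos_of_ne_zero haS h1.2
    have hb : ‖tl (a i)‖ = a i 0 := le_antisymm ((mem_SOC_iff _).mp haS) (not_lt.mp h2)
    have hz : (⟪reflect (a i), a i⟫ : ℝ) = 0 := by
      rw [inner_split, reflect_apply_zero, tl_reflect, inner_neg_left,
        real_inner_self_eq_norm_sq, hb]
      ring
    have hmem : -(a i) ∈ halfSpace (reflect (a i)) := by
      show (0:ℝ) ≤ ⟪reflect (a i), -(a i)⟫
      rw [inner_neg_right, hz]
      norm_num
    rw [heq, mem_SOC_iff] at hmem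
    have h5 : tl (-(a i)) = -(tl (a i)) := by ext j; simp [tl]
    have h6 : (-(a i)) 0 = -(a i 0) := rfl
    rw [h5, norm_neg, hb, h6] at hmem
    linarith

lemma push_global {B : ∀ i, Set (EuclideanSpace ℝ (Fin (k i + 1)))} {a : TS k}
    (hB : IsESOC k B) (ha : a ∈ prodSet k B) (x : TS k)
    (hx : x ∈ prodSet k (relaxB B a)) {ε : ℝ} (hε : 0 < ε) :
    ∃ t : ℝ, 0 ≤ t ∧ ∃ z ∈ prodSet k B, dist (x + t • a) z < ε := by
  set ε' := ε / (m + 1) with hε'def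
  have hε' : 0 < ε' := by positivity
  have hblock : ∀ i, ∃ T : ℝ, 0 ≤ T ∧ ∀ t, T ≤ t →
      ∃ z ∈ B i, dist (x i + t • a i) z ≤ ε' := by
    intro i
    by_cases h1 : B i = SOC (k i) ∧ a i ≠ 0
    · have haS : a i ∈ SOC (k i) := h1.1 ▸ ha i
      have hxr : x i ∈ relaxB B a i := hx i
      unfold relaxB at hxr
      rw [if_pos h1] at hxr
      by_cases h2 : ‖tl (a i)‖ < a i 0
      · -- interior case
        refine ⟨max 0 ((‖tl (x i)‖ - x i 0) / (a i 0 - ‖tl (a i)‖)), le_max_left _ _,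
          fun t ht => ?_⟩
        refine ⟨x i + t • a i, ?_, by simp [hε'.le]⟩
        rw [h1.1, mem_SOC_iff]
        have ht0 : 0 ≤ t := le_trans (le_max_left _ _) ht
        have htq : (‖tl (x i)‖ - x i 0) / (a i 0 - ‖tl (a i)‖) ≤ t :=
          le_trans (le_max_right _ _) ht
        have hpos : 0 < a i 0 - ‖tl (a i)‖ := by linarith
        rw [div_le_iff₀ hpos] at htq
        have heq : tl (x i + t • a i) = tl (x i) + t • tl (a i) := by
            ext j; simp [tl]
        rw [heq]
        calc ‖tl (x i) + t • tl (a i)‖ ≤ ‖tl (x i)‖ + ‖t • tl (a i)‖ := norm_add_le _ _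
          _ = ‖tl (x i)‖ + t * ‖tl (a i)‖ := by
              rw [norm_smul, Real.norm_eq_abs, abs_of_nonneg ht0]
          _ ≤ x i 0 + t * a i 0 := by nlinarith
          _ = (x i + t • a i) 0 := rfl
      · -- boundary case
        rw [if_neg h2] at hxr
        have hb : ‖tl (a i)‖ = a i 0 := le_antisymm ((mem_SOC_iff _).mp haS) (not_lt.mp h2)
        have ha00 : 0 < a i 0 := SOC_pos_of_ne_zero haS h1.2
        have hxh : 0 ≤ a i 0 * x i 0 - ⟪tl (a i), tl (x i)⟫ := by
          have h7 : (0:ℝ) ≤ ⟪reflect (a i), x i⟫ := hxr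
          rw [inner_split, reflect_apply_zero, tl_reflect, inner_neg_left] at h7
          linarith
        refine ⟨max 0 (max ((‖tl (x i)‖ ^ 2) / (2 * ε' * a i 0)) ((-(x i 0) - ε') / a i 0)),
          le_max_left _ _, fun t ht => ?_⟩
        have ht0 : 0 ≤ t := le_trans (le_max_left _ _) ht
        have ht1 : ‖tl (x i)‖ ^ 2 / (2 * ε' * a i 0) ≤ t :=
          le_trans (le_trans (le_max_left _ _) (le_max_right _ _)) ht
        have ht2 : (-(x i 0) - ε') / a i 0 ≤ t :=
          le_trans (le_trans (le_max_right _ _) (le_max_right _ _)) ht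
        rw [div_le_iff₀ (by positivity)] at ht1
        rw [div_le_iff₀ ha00] at ht2
        set z : EuclideanSpace ℝ (Fin (k i + 1)) :=
          x i + t • a i + EuclideanSpace.single 0 ε' with hzdef
        have hz0 : z 0 = x i 0 + t * a i 0 + ε' := by
          have h8 : z 0 = x i 0 + (t • a i) 0 + EuclideanSpace.single (0 : Fin (k i + 1)) ε' 0 := rfl
          rw [h8, EuclideanSpace.single_apply, if_pos rfl]
          rfl
        have htlz : tl z = tl (x i) + t • tl (a i) := by
          ext j
          have h8 : tl z j = x i j.succ + (t • a i) j.succ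
              + EuclideanSpace.single (0 : Fin (k i + 1)) ε' j.succ := rfl
          rw [h8, EuclideanSpace.single_apply, if_neg (Fin.succ_ne_zero j)]
          rw [add_zero]
          rfl
        have hrhs : 0 ≤ x i 0 + t * a i 0 + ε' := by nlinarith
        have hzS : z ∈ SOC (k i) := by
          rw [mem_SOC_iff, htlz, hz0]
          have hexp : ‖tl (x i) + t • tl (a i)‖ ^ 2
              = ‖tl (x i)‖ ^ 2 + 2 * t * ⟪tl (x i), tl (a i)⟫ + t ^ 2 * ‖tl (a i)‖ ^ 2 := by
            rw [norm_add_sq_real, real_inner_smul_right, norm_smul, Real.norm_eq_abs,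
              mul_pow, sq_abs]
            ring
          have hip : ⟪tl (a i), tl (x i)⟫ = ⟪tl (x i), tl (a i)⟫ := real_inner_comm _ _
          have hsq : ‖tl (x i) + t • tl (a i)‖ ^ 2 ≤ (x i 0 + t * a i 0 + ε') ^ 2 := by
            rw [hexp, hb]
            nlinarith [mul_nonneg ht0 hxh, sq_nonneg (x i 0 + ε'), ht1]
          nlinarith [norm_nonneg (tl (x i) + t • tl (a i))]
        refine ⟨z, by rw [h1.1]; exact hzS, ?_⟩
        rw [dist_eq_norm]
        have h9 : x i + t • a i - z = -(EuclideanSpace.single 0 ε') := by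
          rw [hzdef]; abel
        rw [h9, norm_neg, EuclideanSpace.norm_single, Real.norm_eq_abs, abs_of_pos hε']
    · -- unchanged block
      refine ⟨0, le_rfl, fun t ht => ?_⟩
      have hxB : x i ∈ B i := by
        have h7 := hx i
        unfold relaxB at h7
        rw [if_neg h1] at h7
        exact h7
      exact ⟨x i + t • a i, block_add_smul (hB i) hxB (ha i) ht, by simp [hε'.le]⟩
  choose T hT0 hT using hblock
  set t := (insert (0:ℝ) (Finset.univ.image T)).max' (Finset.insert_nonempty _ _) with htdef
  have ht0 : 0 ≤ t := Finset.le_max' _ _ (Finset.mem_insert_self _ _)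
  have hti : ∀ i, T i ≤ t := fun i => Finset.le_max' _ _
    (Finset.mem_insert_of_mem (Finset.mem_image_of_mem T (Finset.mem_univ i)))
  have hzex : ∀ i, ∃ z ∈ B i, dist (x i + t • a i) z ≤ ε' := fun i => hT i t (hti i)
  choose z hzB hzd using hzex
  refine ⟨t, ht0, WithLp.toLp 2 z, hzB, ?_⟩
  have hdd : dist (x + t • a) (WithLp.toLp 2 z : TS k) = Real.sqrt (∑ i, dist (x i + t • a i) (z i) ^ 2) := by
    rw [dist_eq_norm, PiLp.norm_eq_of_L2]
    congr 1
  rw [hdd, Real.sqrt_lt' hε]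
  have hsum : (∑ i, dist (x i + t • a i) (z i) ^ 2) ≤ (m : ℝ) * ε' ^ 2 := by
    calc (∑ i, dist (x i + t • a i) (z i) ^ 2) ≤ ∑ _i : Fin m, ε' ^ 2 :=
        Finset.sum_le_sum fun i _ => by nlinarith [hzd i, dist_nonneg (x := x i + t • a i) (y := z i)]
      _ = (m : ℝ) * ε' ^ 2 := by
        rw [Finset.sum_const, Finset.card_univ, Fintype.card_fin, nsmul_eq_mul]
  have hlt : (m:ℝ) * ε' ^ 2 < ε ^ 2 := by
    have h2 : (0:ℝ) < ((m:ℝ) + 1) ^ 2 := by positivity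
    have h3 : ε' = ε / ((m:ℝ) + 1) := rfl
    have hm : (m:ℝ) < ((m:ℝ) + 1) ^ 2 := by nlinarith [Nat.cast_nonneg (α := ℝ) m]
    rw [h3, div_pow, ← mul_div_assoc, div_lt_iff₀ h2]
    nlinarith [mul_lt_mul_of_pos_right hm (pow_pos hε 2)]
  linarith

end relax

end WIP
namespace WIP

section main

variable {m : ℕ} {k : Fin m → ℕ}

lemma aux_main : ∀ (mL : ℕ) (B : ∀ i, Set (EuclideanSpace ℝ (Fin (k i + 1)))),
    IsESOC k B → (Finset.univ.filter fun i => B i = SOC (k i)).card = mL →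
    ∀ (L : Submodule ℝ (TS k)) (c : TS k), WeaklyInfeasible (prodSet k B) L c →
    ∃ (L' : Submodule ℝ (TS k)) (c' : TS k), L' ≤ L ∧ c' ∈ affineSet L c ∧
      WeaklyInfeasible (prodSet k B) L' c' ∧ Module.finrank ℝ L' ≤ mL := by
  intro mL
  induction mL using Nat.strongRecOn with
  | _ mL IH =>
  intro B hB hmL L c hwi
  obtain ⟨hdisj, hdist⟩ := hwi
  have hKne : (prodSet k B).Nonempty := ⟨0, zero_mem_prodSet hB⟩
  have hAne : (affineSet L c).Nonempty := ⟨c, mem_affineSet_self L c⟩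
  have happ : Approaches (prodSet k B) (affineSet L c) :=
    approaches_of_setDist_eq_zero hKne hAne hdist
  obtain ⟨a, haK, haL, i₀, hi₀, hai₀⟩ := exists_direction hB L c hdisj happ
  have ha0 : a ≠ 0 := by
    intro h
    apply hai₀
    rw [h]
    rfl
  have hmL1 : 1 ≤ mL := by
    rw [← hmL]
    exact Finset.card_pos.mpr ⟨i₀, by simp [hi₀]⟩
  have hfilter : (Finset.univ.filter fun i => relaxB B a i = SOC (k i))
      ⊂ (Finset.univ.filter fun i => B i = SOC (k i)) := by
    constructor
    · intro i hi
      rw [Finset.mem_filter] at hi ⊢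
      refine ⟨Finset.mem_univ _, ?_⟩
      by_cases h1 : B i = SOC (k i) ∧ a i ≠ 0
      · exact absurd hi.2 (relax_ne_SOC haK h1)
      · have : relaxB B a i = B i := by unfold relaxB; rw [if_neg h1]
        rw [← this]
        exact hi.2
    · intro hsub
      have hi₀mem : i₀ ∈ Finset.univ.filter fun i => B i = SOC (k i) := by simp [hi₀]
      have := hsub hi₀mem
      rw [Finset.mem_filter] at this
      exact relax_ne_SOC haK ⟨hi₀, hai₀⟩ this.2
  by_cases hint : (prodSet k (relaxB B a) ∩ affineSet L c).Nonempty
  · -- base: relaxed problem meets the affine set; a single direction suffices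
    obtain ⟨c', hc'K, hc'A⟩ := hint
    refine ⟨Submodule.span ℝ {a}, c', (Submodule.span_singleton_le_iff_mem a L).mpr haL,
      hc'A, ⟨?_, ?_⟩, ?_⟩
    · rw [Set.eq_empty_iff_forall_notMem]
      rintro x ⟨hxK, hxA⟩
      have hxA' : x ∈ affineSet L c :=
        affineSet_subset ((Submodule.span_singleton_le_iff_mem a L).mpr haL) hc'A hxA
      have : x ∈ prodSet k B ∩ affineSet L c := ⟨hxK, hxA'⟩
      rw [hdisj] at this
      exact this
    · apply setDist_eq_zero_of_approaches
      intro ε hε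
      obtain ⟨t, ht0, z, hzK, hdz⟩ := push_global hB haK c' hc'K hε
      refine ⟨z, hzK, c' + t • a, ?_, ?_⟩
      · rw [mem_affineSet_iff]
        have : c' + t • a - c' = t • a := by abel
        rw [this]
        exact Submodule.smul_mem _ t (Submodule.mem_span_singleton_self a)
      · rw [dist_comm]
        exact hdz
    · rw [finrank_span_singleton ha0]
      exact hmL1
  · -- recursive step
    have hdisj' : prodSet k (relaxB B a) ∩ affineSet L c = ∅ :=
      Set.not_nonempty_iff_eq_empty.mp hint
    have happ' : Approaches (prodSet k (relaxB B a)) (affineSet L c) := by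
      intro ε hε
      obtain ⟨x, hx, y, hy, h⟩ := happ ε hε
      exact ⟨x, subset_relax haK hx, y, hy, h⟩
    have hwi' : WeaklyInfeasible (prodSet k (relaxB B a)) L c :=
      ⟨hdisj', setDist_eq_zero_of_approaches happ'⟩
    have hcard : (Finset.univ.filter fun i => relaxB B a i = SOC (k i)).card < mL := by
      rw [← hmL]
      exact Finset.card_lt_card hfilter
    obtain ⟨L'', c', hle'', hc'A, ⟨hd'', hdist''⟩, hrk''⟩ :=
      IH _ hcard (relaxB B a) (relax_isESOC hB haK) rfl L c hwi'
    have hsple : Submodule.span ℝ {a} ≤ L := (Submodule.span_singleton_le_iff_mem a L).mpr haL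
    have hLle : L'' ⊔ Submodule.span ℝ {a} ≤ L := sup_le hle'' hsple
    refine ⟨L'' ⊔ Submodule.span ℝ {a}, c', hLle, hc'A, ⟨?_, ?_⟩, ?_⟩
    · rw [Set.eq_empty_iff_forall_notMem]
      rintro x ⟨hxK, hxA⟩
      have hxA' : x ∈ affineSet L c := affineSet_subset hLle hc'A hxA
      have : x ∈ prodSet k B ∩ affineSet L c := ⟨hxK, hxA'⟩
      rw [hdisj] at this
      exact this
    · apply setDist_eq_zero_of_approaches
      intro ε hε
      have hK'ne : (prodSet k (relaxB B a)).Nonempty := ⟨0, zero_mem_prodSet (relax_isESOC hB haK)⟩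
      have hA'ne : (affineSet L'' c').Nonempty := ⟨c', mem_affineSet_self L'' c'⟩
      obtain ⟨x, hx, y, hy, hxy⟩ :=
        approaches_of_setDist_eq_zero hK'ne hA'ne hdist'' (ε/2) (by positivity)
      obtain ⟨t, ht0, z, hzK, hdz⟩ := push_global hB haK x hx (show (0:ℝ) < ε/2 by positivity)
      refine ⟨z, hzK, y + t • a, ?_, ?_⟩
      · rw [mem_affineSet_iff]
        have heq : y + t • a - c' = (y - c') + t • a := by abel
        rw [heq]
        exact Submodule.add_mem _ (le_sup_left (a := L'') (b := Submodule.span ℝ {a}) hy)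
          (le_sup_right (a := L'') (b := Submodule.span ℝ {a})
            (Submodule.smul_mem _ t (Submodule.mem_span_singleton_self a)))
      · calc dist z (y + t • a) ≤ dist z (x + t • a) + dist (x + t • a) (y + t • a) :=
            dist_triangle _ _ _
          _ = dist z (x + t • a) + dist x y := by rw [dist_add_right]
          _ < ε/2 + ε/2 := by
              rw [dist_comm z (x + t • a)]
              exact add_lt_add hdz hxy
          _ = ε := by ring
    · have hsum := Submodule.finrank_sup_add_finrank_inf_eq L'' (Submodule.span ℝ {a})
      have h1 : Module.finrank ℝ (Submodule.span ℝ {a}) = 1 := finrank_span_singleton ha0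
      have h2 : Module.finrank ℝ (L'' ⊔ Submodule.span ℝ {a} : Submodule ℝ (TS k))
          ≤ Module.finrank ℝ L'' + 1 := by omega
      omega

end main

end WIP
/-- **Theorem (minimal number of directions needed to approach `K`).**
Let `(K, L, c)` be a weakly infeasible problem, where `K ⊆ ℝ^n` is an extended second order
cone with exactly `mL` Lorentz-cone blocks, `L` a linear subspace and `c` a point.  Then
there exist a linear subspace `L' ⊆ L` and a point `c' ∈ L + c` such that `(K, L', c')` is
weakly infeasible and the dimension of the affine set `L' + c'` (i.e. `dim L'`) is at most
`mL`. -/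
theorem weakly_infeasible_low_dimensional_subspace {m : ℕ} (k : Fin m → ℕ)
    (B : ∀ i, Set (EuclideanSpace ℝ (Fin (k i + 1)))) (hB : IsESOC k B)
    (L : Submodule ℝ (TS k)) (c : TS k) (mL : ℕ)
    (hmL : (Finset.univ.filter fun i => B i = SOC (k i)).card = mL)
    (hwi : WeaklyInfeasible (prodSet k B) L c) :
    ∃ (L' : Submodule ℝ (TS k)) (c' : TS k), L' ≤ L ∧ c' ∈ affineSet L c ∧
      WeaklyInfeasible (prodSet k B) L' c' ∧ Module.finrank ℝ L' ≤ mL := by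
  exact WIP.aux_main mL B hB hmL L c hwi

end
end

section
/- Let K ⊆ ℝ^n be an extended second order cone, A : ℝ^n → ℝ^m a linear map with adjoint A^T, b ∈ ℝ^m, c ∈ ℝ^n, and suppose the problem (D): sup{b^T y : c − A^T y ∈ K} is strongly feasible, i.e., there exists y with c − A^T y ∈ ri K. Let L = (range A^T) ∩ {A^T y : b^T y = 0} and let K_γ be the cone of the last problem of a maximal relaxation sequence for (K, L, c). Then there exists y with c − A^T y ∈ ri K_γ; that is, the relaxed problem (D'): sup{b^T y : c − A^T y ∈ K_γ} has a relative-interior feasible solution. -/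
open scoped RealInnerProductSpace Pointwise
open Classical

noncomputable section

/-- A relaxation sequence for `(K, L, c)`: a finite sequence of cones `K₁, …, K_γ` (given
blockwise; `blocks t` is `K_{t+1}` for `t < γ`, the point `c` plays no role in the data)
with `K₁ = K`, each `K_t` an extended second order cone, and for each step there exists
`d ∈ K_t ∩ L` such that `K_{t+1}` is the relaxed cone obtained from `K_t` and `d`, with
`K_t` strictly contained in `K_{t+1}`. -/
structure RelaxSeq {m : ℕ} (k : Fin m → ℕ) (B : ∀ i, Set (EuclideanSpace ℝ (Fin (k i + 1))))
    (L : Submodule ℝ (TS k)) where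
  /-- the length `γ` of the sequence -/
  gamma : ℕ
  gamma_pos : 0 < gamma
  /-- the cones of the sequence, given blockwise -/
  blocks : ℕ → ∀ i, Set (EuclideanSpace ℝ (Fin (k i + 1)))
  first : blocks 0 = B
  esoc : ∀ t, t < gamma → IsESOC k (blocks t)
  step : ∀ t, t + 1 < gamma → ∃ d : TS k, d ∈ prodSet k (blocks t) ∧ d ∈ L ∧
    blocks (t + 1) = relaxedBlocks k (blocks t) d ∧
    prodSet k (blocks t) ⊂ prodSet k (blocks (t + 1))

/-- The blocks of the cone `K_γ` of the last problem of a relaxation sequence. -/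
def RelaxSeq.lastBlocks {m : ℕ} {k : Fin m → ℕ}
    {B : ∀ i, Set (EuclideanSpace ℝ (Fin (k i + 1)))} {L : Submodule ℝ (TS k)}
    (S : RelaxSeq k B L) : ∀ i, Set (EuclideanSpace ℝ (Fin (k i + 1))) :=
  S.blocks (S.gamma - 1)

/-- A relaxation sequence is maximal if the last problem admits no non-trivial relaxation,
i.e. every `d ∈ K_γ ∩ L` has `H₁(d, K_γ) ∪ H₂(d, K_γ) = ∅`. -/
def RelaxSeq.Maximal {m : ℕ} {k : Fin m → ℕ}
    {B : ∀ i, Set (EuclideanSpace ℝ (Fin (k i + 1)))} {L : Submodule ℝ (TS k)}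
    (S : RelaxSeq k B L) : Prop :=
  ∀ d : TS k, d ∈ prodSet k S.lastBlocks → d ∈ L →
    H1 k S.lastBlocks d ∪ H2 k S.lastBlocks d = ∅

/-- The subspace `L = (range Aᵀ) ∩ {Aᵀ y : bᵀ y = 0}`. -/
def dualL {m p : ℕ} (k : Fin m → ℕ) (A : TS k →ₗ[ℝ] EuclideanSpace ℝ (Fin p))
    (b : EuclideanSpace ℝ (Fin p)) : Submodule ℝ (TS k) :=
  LinearMap.range (LinearMap.adjoint A) ⊓
    Submodule.map (LinearMap.adjoint A) (LinearMap.ker (innerSL ℝ b).toLinearMap)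


/-! ### Auxiliary lemmas -/

section Aux

open AffineSubspace Set

theorem memII_iff {V : Type*} [NormedAddCommGroup V] [NormedSpace ℝ V] {s : Set V} {x : V} :
    x ∈ intrinsicInterior ℝ s ↔ x ∈ affineSpan ℝ s ∧
      ∃ ε > 0, ∀ z ∈ affineSpan ℝ s, dist z x < ε → z ∈ s := by
  constructor
  · rintro ⟨y, hy, rfl⟩
    refine ⟨y.2, ?_⟩
    rw [mem_interior_iff_mem_nhds, Metric.mem_nhds_iff] at hy
    obtain ⟨ε, hε, hball⟩ := hy
    exact ⟨ε, hε, fun z hz hd => hball (show dist (⟨z, hz⟩ : affineSpan ℝ s) y < ε from hd)⟩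
  · rintro ⟨hx, ε, hε, h⟩
    refine ⟨⟨x, hx⟩, ?_, rfl⟩
    rw [mem_interior_iff_mem_nhds, Metric.mem_nhds_iff]
    exact ⟨ε, hε, fun z hz => h z z.2 hz⟩

variable {m : ℕ} {k : Fin m → ℕ} {B : ∀ i, Set (EuclideanSpace ℝ (Fin (k i + 1)))}

def projL (k : Fin m → ℕ) (i : Fin m) : TS k →ₗ[ℝ] EuclideanSpace ℝ (Fin (k i + 1)) :=
  (LinearMap.proj (R := ℝ) (φ := fun j => EuclideanSpace ℝ (Fin (k j + 1))) i).comp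
    (WithLp.linearEquiv 2 ℝ (∀ j, EuclideanSpace ℝ (Fin (k j + 1)))).toLinearMap

def singL (k : Fin m → ℕ) (i : Fin m) : EuclideanSpace ℝ (Fin (k i + 1)) →ₗ[ℝ] TS k :=
  ((WithLp.linearEquiv 2 ℝ (∀ j, EuclideanSpace ℝ (Fin (k j + 1)))).symm.toLinearMap).comp
    (LinearMap.single ℝ (fun j => EuclideanSpace ℝ (Fin (k j + 1))) i)

@[simp] lemma projL_apply (i : Fin m) (z : TS k) : projL k i z = z i := rfl

@[simp] lemma singL_apply (i : Fin m) (a : EuclideanSpace ℝ (Fin (k i + 1))) (j : Fin m) :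
    singL k i a j = if h : j = i then h ▸ a else 0 := by
  simp only [singL, LinearMap.coe_comp, LinearEquiv.coe_coe, Function.comp_apply,
    LinearMap.coe_single]
  change (Pi.single (M := fun j => EuclideanSpace ℝ (Fin (k j + 1))) i a) j = _
  rcases eq_or_ne j i with rfl | h
  · simp
  · simp [h, Pi.single_eq_of_ne h]

lemma proj_affineSpan (i : Fin m) {z : TS k} (hz : z ∈ affineSpan ℝ (prodSet k B)) :
    z i ∈ affineSpan ℝ (B i) := by
  have h : affineSpan ℝ (prodSet k B) ≤
      AffineSubspace.comap ((projL k i).toAffineMap) (affineSpan ℝ (B i)) := by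
    rw [affineSpan_le]
    intro w hw
    simp only [SetLike.mem_coe, AffineSubspace.mem_comap]
    exact subset_affineSpan ℝ _ (hw i)
  exact (AffineSubspace.mem_comap).1 (h hz)

lemma update_eq_vadd (w : TS k) (i : Fin m) (a : EuclideanSpace ℝ (Fin (k i + 1))) :
    (WithLp.toLp 2 (Function.update (w : ∀ j, EuclideanSpace ℝ (Fin (k j + 1))) i a) : TS k)
      = singL k i (a - w i) +ᵥ w := by
  apply PiLp.ext; intro j
  show _ = singL k i (a - w i) j + w j
  rcases eq_or_ne j i with rfl | hj
  · simp [Function.update]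
  · simp [Function.update, hj]

lemma singL_mem_vectorSpan (hne : ∀ j, (B j).Nonempty) (i : Fin m)
    {v : EuclideanSpace ℝ (Fin (k i + 1))} (hv : v ∈ vectorSpan ℝ (B i)) :
    singL k i v ∈ vectorSpan ℝ (prodSet k B) := by
  classical
  choose w0 hw0 using hne
  have hw0' : (WithLp.toLp 2 w0 : TS k) ∈ prodSet k B := hw0
  have hle : Submodule.map (singL k i) (vectorSpan ℝ (B i)) ≤ vectorSpan ℝ (prodSet k B) := by
    rw [vectorSpan_def, Submodule.map_span, Submodule.span_le]
    rintro _ ⟨u, hu, rfl⟩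
    rw [Set.mem_vsub] at hu
    obtain ⟨b, hb, b', hb', rfl⟩ := hu
    apply Submodule.subset_span
    have hmb : (WithLp.toLp 2 (Function.update (w0 : ∀ j, EuclideanSpace ℝ (Fin (k j + 1))) i b) : TS k)
        ∈ prodSet k B := by
      intro j
      rcases eq_or_ne j i with rfl | hj
      · simpa using hb
      · simpa [Function.update_of_ne hj] using hw0 j
    have hmb' : (WithLp.toLp 2 (Function.update (w0 : ∀ j, EuclideanSpace ℝ (Fin (k j + 1))) i b') : TS k)
        ∈ prodSet k B := by
      intro j
      rcases eq_or_ne j i with rfl | hj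
      · simpa using hb'
      · simpa [Function.update_of_ne hj] using hw0 j
    have heq : singL k i (b -ᵥ b')
        = (WithLp.toLp 2 (Function.update (w0 : ∀ j, EuclideanSpace ℝ (Fin (k j + 1))) i b) : TS k)
          -ᵥ (WithLp.toLp 2 (Function.update (w0 : ∀ j, EuclideanSpace ℝ (Fin (k j + 1))) i b') : TS k) := by
      apply PiLp.ext
      intro j
      simp only [vsub_eq_sub, PiLp.sub_apply]
      rcases eq_or_ne j i with rfl | hj
      · simp
      · simp [Function.update_of_ne hj, hj]
    rw [heq]
    exact Set.vsub_mem_vsub hmb hmb'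
  exact hle ⟨v, hv, rfl⟩

lemma update_mem_affineSpan (hne : ∀ j, (B j).Nonempty) (i : Fin m) {w : TS k}
    (hw : w ∈ affineSpan ℝ (prodSet k B)) {a : EuclideanSpace ℝ (Fin (k i + 1))}
    (ha : a ∈ affineSpan ℝ (B i)) :
    (WithLp.toLp 2 (Function.update (w : ∀ j, EuclideanSpace ℝ (Fin (k j + 1))) i a) : TS k)
      ∈ affineSpan ℝ (prodSet k B) := by
  rw [update_eq_vadd]
  apply AffineSubspace.vadd_mem_of_mem_direction _ hw
  rw [direction_affineSpan]
  exact singL_mem_vectorSpan hne i (by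
    rw [← direction_affineSpan]
    exact AffineSubspace.vsub_mem_direction ha (proj_affineSpan i hw))

def upd (x : TS k) (i : Fin m) (a : EuclideanSpace ℝ (Fin (k i + 1))) : TS k :=
  WithLp.toLp 2 (Function.update x.ofLp i a)

lemma upd_same (x : TS k) (i : Fin m) (a : EuclideanSpace ℝ (Fin (k i + 1))) :
    upd x i a i = a := by simp [upd]

lemma upd_noteq (x : TS k) {i j : Fin m} (hj : j ≠ i) (a : EuclideanSpace ℝ (Fin (k i + 1))) :
    upd x i a j = x j := by simp [upd, Function.update_of_ne hj]

lemma upd_mem_affineSpan (hne : ∀ j, (B j).Nonempty) (i : Fin m) {w : TS k}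
    (hw : w ∈ affineSpan ℝ (prodSet k B)) {a : EuclideanSpace ℝ (Fin (k i + 1))}
    (ha : a ∈ affineSpan ℝ (B i)) : upd w i a ∈ affineSpan ℝ (prodSet k B) :=
  update_mem_affineSpan hne i hw ha

lemma dist_coord_le (z x : TS k) (i : Fin m) : dist (z i) (x i) ≤ dist z x := by
  have h1 : dist (z i) (x i) ^ 2 ≤ ∑ j, dist (z j) (x j) ^ 2 :=
    Finset.single_le_sum (f := fun j => dist (z j) (x j) ^ 2)
      (fun j _ => sq_nonneg _) (Finset.mem_univ i)
  have h2 := Real.sqrt_le_sqrt h1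
  rw [Real.sqrt_sq dist_nonneg] at h2
  rw [PiLp.dist_eq_of_L2 z x]
  exact h2

lemma dist_upd (x : TS k) (i : Fin m) (a : EuclideanSpace ℝ (Fin (k i + 1))) :
    dist (upd x i a) x = dist a (x i) := by
  rw [PiLp.dist_eq_of_L2 (upd x i a) x, Finset.sum_eq_single i]
  · rw [upd_same, Real.sqrt_sq dist_nonneg]
  · intro j _ hj
    rw [upd_noteq x hj]
    simp
  · simp

lemma mem_ri_prod (hne : ∀ j, (B j).Nonempty) {x : TS k} :
    x ∈ intrinsicInterior ℝ (prodSet k B) ↔ ∀ i, x i ∈ intrinsicInterior ℝ (B i) := by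
  constructor
  · rw [memII_iff]
    rintro ⟨hx, ε, hε, h⟩ i
    rw [memII_iff]
    refine ⟨proj_affineSpan i hx, ε, hε, fun z hz hd => ?_⟩
    have hu := upd_mem_affineSpan hne i hx hz
    have hdist : dist (upd x i z) x < ε := by rw [dist_upd]; exact hd
    have := h _ hu hdist i
    rwa [upd_same] at this
  · intro h
    have hh := fun i => memII_iff.1 (h i)
    choose hspan hrest using hh
    choose εf hεf hball using hrest
    choose w0 hw0 using hne
    have hxspan : ∀ (s : Finset (Fin m)),
        (WithLp.toLp 2 (fun j => if j ∈ s then x j else w0 j : ∀ j, EuclideanSpace ℝ (Fin (k j + 1))) : TS k)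
          ∈ affineSpan ℝ (prodSet k B) := by
      intro s
      induction s using Finset.induction_on with
      | empty => exact subset_affineSpan ℝ _ (by intro j; simpa using hw0 j)
      | @insert i s his ih =>
        have heq : (WithLp.toLp 2 (fun j => if j ∈ insert i s then x j else w0 j :
            ∀ j, EuclideanSpace ℝ (Fin (k j + 1))) : TS k)
            = upd (WithLp.toLp 2 (fun j => if j ∈ s then x j else w0 j :
                ∀ j, EuclideanSpace ℝ (Fin (k j + 1))) : TS k) i (x i) := by
          apply PiLp.ext
          intro j
          rcases eq_or_ne j i with rfl | hj
          · rw [upd_same]; simp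
          · rw [upd_noteq _ hj]; simp [hj, Finset.mem_insert]
        rw [heq]
        exact upd_mem_affineSpan (fun j => ⟨w0 j, hw0 j⟩) i ih (hspan i)
    have hxspan' : x ∈ affineSpan ℝ (prodSet k B) := by
      have := hxspan Finset.univ
      simpa using this
    set F : Finset ℝ := insert (1 : ℝ) (Finset.univ.image εf) with hF
    have hFne : F.Nonempty := ⟨1, Finset.mem_insert_self _ _⟩
    set ε := F.min' hFne with hε
    have hεpos : 0 < ε := by
      have := F.min'_mem hFne
      rw [← hε] at this
      rcases Finset.mem_insert.1 this with h0 | h0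
      · rw [h0]; norm_num
      · obtain ⟨i, _, hi⟩ := Finset.mem_image.1 h0
        rw [← hi]; exact hεf i
    rw [memII_iff]
    refine ⟨hxspan', ε, hεpos, fun z hz hd i => ?_⟩
    have h1 : dist (z i) (x i) < εf i := by
      have h2 : ε ≤ εf i :=
        F.min'_le _ (Finset.mem_insert_of_mem (Finset.mem_image_of_mem εf (Finset.mem_univ i)))
      exact lt_of_le_of_lt (dist_coord_le z x i) (lt_of_lt_of_le hd h2)
    exact hball i (z i) (proj_affineSpan i hz) h1

variable {K : ℕ}

lemma continuous_tail (K : ℕ) :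
    Continuous (fun x : EuclideanSpace ℝ (Fin (K + 1)) =>
      Real.sqrt (∑ j : Fin K, x j.succ ^ 2)) := by
  apply Continuous.sqrt
  exact continuous_finset_sum _ fun j _ =>
    ((EuclideanSpace.proj (j.succ : Fin (K + 1))).continuous).pow 2

lemma soc_closed (K : ℕ) : IsClosed (SOC K) :=
  isClosed_le (continuous_tail K) (EuclideanSpace.proj (0 : Fin (K + 1))).continuous

lemma strict_subset_interior :
    {x : EuclideanSpace ℝ (Fin (K + 1)) | Real.sqrt (∑ j : Fin K, x j.succ ^ 2) < x 0}
      ⊆ interior (SOC K) :=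
  interior_maximal (fun x hx => (le_of_lt hx : Real.sqrt _ ≤ x 0))
    (isOpen_lt (continuous_tail K) (EuclideanSpace.proj (0 : Fin (K + 1))).continuous)

lemma ri_SOC_strict {x : EuclideanSpace ℝ (Fin (K + 1))}
    (hx : x ∈ intrinsicInterior ℝ (SOC K)) :
    Real.sqrt (∑ j : Fin K, x j.succ ^ 2) < x 0 := by
  rw [memII_iff] at hx
  obtain ⟨hsp, ε, hε, h⟩ := hx
  set e0 : EuclideanSpace ℝ (Fin (K + 1)) := EuclideanSpace.single 0 1 with he0def
  have he0 : e0 ∈ SOC K := by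
    simp [SOC, he0def, EuclideanSpace.single_apply, Fin.succ_ne_zero]
  have h00 : (0 : EuclideanSpace ℝ (Fin (K + 1))) ∈ SOC K := by simp [SOC]
  have hdir : e0 ∈ (affineSpan ℝ (SOC K)).direction := by
    rw [direction_affineSpan]
    have : e0 = e0 -ᵥ 0 := by simp
    rw [this]
    exact vsub_mem_vectorSpan ℝ he0 h00
  set z : EuclideanSpace ℝ (Fin (K + 1)) := -((ε/2) • e0) + x with hzdef
  have hz : z ∈ affineSpan ℝ (SOC K) := by
    have := AffineSubspace.vadd_mem_of_mem_direction
      (Submodule.smul_mem _ (-(ε/2)) hdir) hsp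
    simpa [vadd_eq_add, neg_smul] using this
  have hdist : dist z x < ε := by
    rw [dist_eq_norm]
    have : z - x = -((ε/2) • e0) := by rw [hzdef, add_sub_cancel_right]
    rw [this, norm_neg, norm_smul, he0def, EuclideanSpace.norm_single]
    simp only [Real.norm_eq_abs, norm_one, mul_one]
    rw [abs_of_pos (by linarith)]
    linarith
  have hzS := h z hz hdist
  have hz0 : z 0 = x 0 - ε/2 := by
    simp [hzdef, PiLp.add_apply, PiLp.smul_apply, he0def, EuclideanSpace.single_apply]
    ring
  have hzsucc : ∀ j : Fin K, z j.succ = x j.succ := by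
    intro j
    simp [hzdef, PiLp.add_apply, PiLp.smul_apply, he0def, EuclideanSpace.single_apply,
      Fin.succ_ne_zero]
  have : Real.sqrt (∑ j : Fin K, x j.succ ^ 2) ≤ x 0 - ε/2 := by
    have := hzS
    simp only [SOC, Set.mem_setOf_eq] at this
    simp_rw [hzsucc] at this
    rwa [hz0] at this
  linarith

lemma frontier_SOC_eq {d : EuclideanSpace ℝ (Fin (K + 1))}
    (hd : d ∈ intrinsicFrontier ℝ (SOC K)) :
    Real.sqrt (∑ j : Fin K, d j.succ ^ 2) = d 0 := by
  have h1 : d ∈ frontier (SOC K) := intrinsicFrontier_subset_frontier hd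
  have h2 : d ∈ SOC K := (soc_closed K).frontier_subset h1
  have h3 : d ∉ interior (SOC K) := fun hc => h1.2 hc
  have h2' : Real.sqrt (∑ j : Fin K, d j.succ ^ 2) ≤ d 0 := h2
  rcases lt_or_eq_of_le h2' with hlt | heq
  · exact absurd (strict_subset_interior hlt) h3
  · exact heq

lemma inner_reflect_pos {d x : EuclideanSpace ℝ (Fin (K + 1))}
    (hd : Real.sqrt (∑ j : Fin K, d j.succ ^ 2) = d 0) (hdne : d ≠ 0)
    (hx : Real.sqrt (∑ j : Fin K, x j.succ ^ 2) < x 0) :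
    0 < ⟪reflect d, x⟫ := by
  have hd0 : 0 < d 0 := by
    have hnn : 0 ≤ d 0 := hd ▸ Real.sqrt_nonneg (∑ j : Fin K, d j.succ ^ 2)
    rcases hnn.lt_or_eq with h | h
    · exact h
    · exfalso
      apply hdne
      have hsum : (∑ j : Fin K, d j.succ ^ 2) = 0 := by
        have h1 : Real.sqrt (∑ j : Fin K, d j.succ ^ 2) = 0 := by rw [hd, ← h]
        have h2 : (∑ j : Fin K, d j.succ ^ 2) ≤ 0 := Real.sqrt_eq_zero'.1 h1
        exact le_antisymm h2 (Finset.sum_nonneg fun j _ => sq_nonneg _)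
      have hcoord : ∀ j : Fin K, d j.succ = 0 := by
        intro j
        have := (Finset.sum_eq_zero_iff_of_nonneg (fun j _ => sq_nonneg (d j.succ))).1 hsum
          j (Finset.mem_univ j)
        exact pow_eq_zero_iff two_ne_zero |>.1 this
      apply PiLp.ext
      intro j
      induction j using Fin.cases with
      | zero => exact h.symm
      | succ j => exact hcoord j
  have hinner : ⟪reflect d, x⟫ = d 0 * x 0 - ∑ j : Fin K, d j.succ * x j.succ := by
    rw [PiLp.inner_apply]
    simp only [RCLike.inner_apply, conj_trivial]
    rw [Fin.sum_univ_succ]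
    have hr0 : reflect d 0 = d 0 := by simp [reflect]
    have hrs : ∀ j : Fin K, reflect d j.succ = - d j.succ := by
      intro j; simp [reflect, Fin.succ_ne_zero]
    rw [hr0]
    simp_rw [hrs]
    simp [sub_eq_add_neg, Finset.sum_neg_distrib, neg_mul, mul_comm]
  have hCS := Real.sum_mul_le_sqrt_mul_sqrt Finset.univ
    (fun j : Fin K => d j.succ) (fun j : Fin K => x j.succ)
  rw [hd] at hCS
  rw [hinner]
  nlinarith [mul_pos hd0 (sub_pos.2 hx), Real.sqrt_nonneg (∑ j : Fin K, x j.succ ^ 2)]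

lemma inner_pos_mem_ri {d x : EuclideanSpace ℝ (Fin (K + 1))} (h : 0 < ⟪d, x⟫) :
    x ∈ intrinsicInterior ℝ (halfSpace d) := by
  apply interior_subset_intrinsicInterior
  have hopen : IsOpen {z : EuclideanSpace ℝ (Fin (K + 1)) | 0 < ⟪d, z⟫} :=
    isOpen_lt continuous_const (Continuous.inner continuous_const continuous_id)
  exact interior_maximal (fun z (hz : 0 < ⟪d, z⟫) => (le_of_lt hz : (0:ℝ) ≤ ⟪d, z⟫)) hopen
    (show (0:ℝ) < ⟪d, x⟫ from h)

lemma zero_mem_block {Bl : Set (EuclideanSpace ℝ (Fin (K + 1)))} (hBl : IsESOCBlock Bl) :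
    (0 : EuclideanSpace ℝ (Fin (K + 1))) ∈ Bl := by
  rcases hBl with rfl | rfl | rfl | ⟨d, _, _, rfl⟩ | ⟨d, _, rfl⟩
  · rfl
  · trivial
  · simp [SOC]
  · simp [halfSpace]
  · exact ⟨0, le_refl 0, (zero_smul ℝ d).symm⟩

end Aux

/-- **Theorem (regularization for attainment), item (i).**
Let `K ⊆ ℝ^n` be an extended second order cone, `A : ℝ^n → ℝ^p` a linear map with adjoint
`Aᵀ`, `b ∈ ℝ^p`, `c ∈ ℝ^n`, and suppose the problem `(D) : sup {bᵀy : c - Aᵀy ∈ K}` is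
strongly feasible, i.e. there is `y` with `c - Aᵀy ∈ ri K`.  Let
`L = (range Aᵀ) ∩ {Aᵀy : bᵀy = 0}` and let `K_γ` be the cone of the last problem of a
maximal relaxation sequence for `(K, L, c)`.  Then there exists `y` with
`c - Aᵀy ∈ ri K_γ`, i.e. the relaxed problem `(D')` has a relative-interior feasible
solution. -/
theorem relaxed_dual_strongly_feasible {m p : ℕ} (k : Fin m → ℕ)
    (B : ∀ i, Set (EuclideanSpace ℝ (Fin (k i + 1)))) (hB : IsESOC k B)
    (A : TS k →ₗ[ℝ] EuclideanSpace ℝ (Fin p)) (b : EuclideanSpace ℝ (Fin p)) (c : TS k)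
    (hsf : ∃ y, c - LinearMap.adjoint A y ∈ intrinsicInterior ℝ (prodSet k B))
    (S : RelaxSeq k B (dualL k A b)) (hmax : S.Maximal) :
    ∃ y, c - LinearMap.adjoint A y ∈ intrinsicInterior ℝ (prodSet k S.lastBlocks) := by
  obtain ⟨y, hy⟩ := hsf
  refine ⟨y, ?_⟩
  set x := c - LinearMap.adjoint A y with hxdef
  have main : ∀ t, t < S.gamma → x ∈ intrinsicInterior ℝ (prodSet k (S.blocks t)) := by
    intro t
    induction t with
    | zero => intro _; rw [S.first]; exact hy
    | succ n ih =>
      intro ht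
      have hn : n < S.gamma := Nat.lt_of_succ_lt ht
      obtain ⟨d, hdK, hdL, hrel, _⟩ := S.step n ht
      have hxprev := ih hn
      have hneB : ∀ i, (S.blocks n i).Nonempty := fun i => ⟨0, zero_mem_block (S.esoc n hn i)⟩
      rw [mem_ri_prod hneB] at hxprev
      have hneB' : ∀ i, (S.blocks (n + 1) i).Nonempty :=
        fun i => ⟨0, zero_mem_block (S.esoc (n + 1) ht i)⟩
      rw [mem_ri_prod hneB']
      intro i
      rw [hrel]
      by_cases h1 : i ∈ H1 k (S.blocks n) d
      · simp only [relaxedBlocks, if_pos h1]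
        exact interior_subset_intrinsicInterior (by rw [interior_univ]; trivial)
      · by_cases h2 : i ∈ H2 k (S.blocks n) d
        · have hB2 : S.blocks n i = SOC (k i) := h2.1
          have hdf : d i ∈ intrinsicFrontier ℝ (SOC (k i)) := h2.2.1
          have hdne : d i ≠ 0 := h2.2.2
          have hxi := hxprev i
          rw [hB2] at hxi
          have hstrict := ri_SOC_strict hxi
          have hfr := frontier_SOC_eq hdf
          have hpos := inner_reflect_pos hfr hdne hstrict
          simp only [relaxedBlocks, if_neg h1, if_pos h2]
          exact inner_pos_mem_ri hpos
        · simp only [relaxedBlocks, if_neg h1, if_neg h2]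
          exact hxprev i
  have hlt : S.gamma - 1 < S.gamma := by
    have := S.gamma_pos
    omega
  exact main (S.gamma - 1) hlt

end
end

section
/- Let K ⊆ ℝ^n be a closed convex cone, L ⊆ ℝ^n a linear subspace, and c ∈ ℝ^n. Then the feasibility problem (K, L, c) is weakly feasible (i.e., K ∩ (L + c) ≠ ∅ but (L + c) ∩ ri K = ∅) if and only if there exist x ∈ K ∩ (L + c) and w ∈ (K* \ K^⊥) ∩ L^⊥ with w^T c = 0. -/
open scoped RealInnerProductSpace
open Set

variable {E : Type*} [NormedAddCommGroup E] [InnerProductSpace ℝ E]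

lemma wf_affineSpan_eq {S : Set E} (h0 : (0:E) ∈ S) :
    (affineSpan ℝ S : Set E) = (Submodule.span ℝ S : Set E) := by
  conv_lhs => rw [← Set.insert_eq_of_mem h0]
  rw [affineSpan_insert_zero]

lemma wf_interior_char {α : Type*} [MetricSpace α] {p : α → Prop} {s : Set α} (x : Subtype p) :
    x ∈ interior ((↑) ⁻¹' s : Set (Subtype p)) ↔
      ∃ ε > 0, ∀ z : α, p z → dist z ↑x < ε → z ∈ s := by
  rw [mem_interior_iff_mem_nhds, Metric.mem_nhds_iff]
  constructor
  · rintro ⟨ε, hε, hball⟩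
    exact ⟨ε, hε, fun z hz hd => hball
      (show (⟨z, hz⟩ : Subtype p) ∈ Metric.ball x ε by
        simpa [Metric.mem_ball, Subtype.dist_eq] using hd)⟩
  · rintro ⟨ε, hε, h⟩
    exact ⟨ε, hε, fun z hz => h z z.2 (by simpa [Subtype.dist_eq] using hz)⟩

lemma wf_bridge {S : Set E} (h0 : (0:E) ∈ S) {x : E} :
    x ∈ intrinsicInterior ℝ S ↔
      ∃ hx : x ∈ Submodule.span ℝ S,
        (⟨x, hx⟩ : Submodule.span ℝ S) ∈
          interior ((↑) ⁻¹' S : Set (Submodule.span ℝ S)) := by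
  have hset : ∀ z : E, z ∈ affineSpan ℝ S ↔ z ∈ Submodule.span ℝ S := by
    intro z
    rw [show (z ∈ affineSpan ℝ S) = (z ∈ (affineSpan ℝ S : Set E)) from rfl,
      wf_affineSpan_eq h0, SetLike.mem_coe]
  rw [mem_intrinsicInterior]
  constructor
  · rintro ⟨y, hy, rfl⟩
    obtain ⟨ε, hε, h⟩ := (wf_interior_char (p := (· ∈ affineSpan ℝ S)) y).mp hy
    refine ⟨(hset _).mp y.2, ?_⟩
    exact (wf_interior_char _).mpr ⟨ε, hε, fun z hz hd => h z ((hset z).mpr hz) hd⟩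
  · rintro ⟨hx, hint⟩
    obtain ⟨ε, hε, h⟩ := (wf_interior_char (p := (· ∈ Submodule.span ℝ S)) _).mp hint
    refine ⟨⟨x, (hset x).mpr hx⟩, ?_, rfl⟩
    exact (wf_interior_char _).mpr ⟨ε, hε, fun z hz hd => h z ((hset z).mp hz) hd⟩

lemma wf_mem_intrinsicInterior {S : Set E} (h0 : (0:E) ∈ S) {x : E} :
    x ∈ intrinsicInterior ℝ S ↔
      x ∈ Submodule.span ℝ S ∧
        ∃ ε > 0, ∀ z : E, z ∈ Submodule.span ℝ S → dist z x < ε → z ∈ S := by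
  rw [wf_bridge h0]
  constructor
  · rintro ⟨hx, hint⟩
    exact ⟨hx, (wf_interior_char _).mp hint⟩
  · rintro ⟨hx, h⟩
    exact ⟨hx, (wf_interior_char _).mpr h⟩

section helpers
variable {S : Set E}

lemma wf_closure_preimage {p : E → Prop} (hS : ∀ x ∈ S, p x) {z : Subtype p}
    (hz : (z : E) ∈ closure S) : z ∈ closure ((↑) ⁻¹' S : Set (Subtype p)) := by
  rw [closure_subtype]
  have himg : ((↑) '' ((↑) ⁻¹' S : Set (Subtype p)) : Set E) = S := by
    ext u
    constructor
    · rintro ⟨v, hv, rfl⟩; exact hv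
    · intro hu; exact ⟨⟨u, hS u hu⟩, hu, rfl⟩
  rwa [himg]

lemma wf_combo (hS : Convex ℝ S) (h0 : (0:E) ∈ S) {y z : E}
    (hy : y ∈ intrinsicInterior ℝ S) (hz : z ∈ closure S) (hzM : z ∈ Submodule.span ℝ S)
    {a b : ℝ} (ha : 0 < a) (hb : 0 ≤ b) (hab : a + b = 1) :
    a • y + b • z ∈ intrinsicInterior ℝ S := by
  obtain ⟨hyM, hyI⟩ := (wf_bridge h0).mp hy
  set M := Submodule.span ℝ S with hM
  have hS' : Convex ℝ ((↑) ⁻¹' S : Set M) := hS.linear_preimage M.subtype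
  have hz' : (⟨z, hzM⟩ : M) ∈ closure ((↑) ⁻¹' S : Set M) :=
    wf_closure_preimage (fun x hx => Submodule.subset_span hx) hz
  have hcombo := hS'.combo_interior_closure_mem_interior hyI hz' ha hb hab
  refine (wf_bridge h0).mpr ⟨M.add_mem (M.smul_mem a hyM) (M.smul_mem b hzM), ?_⟩
  have : (⟨a • y + b • z, M.add_mem (M.smul_mem a hyM) (M.smul_mem b hzM)⟩ : M)
      = a • (⟨y, hyM⟩ : M) + b • (⟨z, hzM⟩ : M) := by
    apply Subtype.ext; simp
  rw [this]; exact hcombo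

lemma wf_extend (h0 : (0:E) ∈ S) {x y : E} (hx : x ∈ intrinsicInterior ℝ S)
    (hy : y ∈ Submodule.span ℝ S) : ∃ t : ℝ, 0 < t ∧ x + t • (x - y) ∈ S := by
  obtain ⟨hxM, ε, hε, h⟩ := (wf_mem_intrinsicInterior h0).mp hx
  set t : ℝ := ε / (2 * (‖x - y‖ + 1)) with ht
  have hden : (0:ℝ) < 2 * (‖x - y‖ + 1) := by positivity
  have htpos : 0 < t := div_pos hε hden
  refine ⟨t, htpos, ?_⟩
  apply h
  · exact (Submodule.span ℝ S).add_mem hxM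
      ((Submodule.span ℝ S).smul_mem t ((Submodule.span ℝ S).sub_mem hxM hy))
  · have : dist (x + t • (x - y)) x = t * ‖x - y‖ := by
      rw [dist_eq_norm]
      simp [norm_smul, abs_of_pos htpos]
    rw [this, ht]
    rw [div_mul_eq_mul_div, div_lt_iff₀ hden]
    nlinarith [norm_nonneg (x - y)]
end helpers

lemma wf_core [FiniteDimensional ℝ E] {S : Set E} (hS : Convex ℝ S) (h0 : (0:E) ∈ S)
    (hni : (0:E) ∉ intrinsicInterior ℝ S) :
    ∃ w : E, (∀ u ∈ S, 0 ≤ ⟪w, u⟫) ∧ ∃ u ∈ S, 0 < ⟪w, u⟫ := by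
  set M := Submodule.span ℝ S with hM
  have hMclosed : IsClosed (M : Set E) := M.closed_of_finiteDimensional
  obtain ⟨y₀, hy₀⟩ := Set.Nonempty.intrinsicInterior hS ⟨0, h0⟩
  -- points -t • y₀ are outside the closure of S
  have key : ∀ t : ℝ, 0 < t → (-t) • y₀ ∉ closure S := by
    intro t ht hcl
    apply hni
    have hy₀M : y₀ ∈ M := Submodule.subset_span (intrinsicInterior_subset hy₀)
    have hzM : (-t) • y₀ ∈ M := M.smul_mem _ hy₀M
    have h1t : (0:ℝ) < 1 + t := by linarith
    have hcombo := wf_combo hS h0 hy₀ hcl hzM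
      (a := t / (1 + t)) (b := 1 / (1 + t))
      (by positivity) (by positivity) (by field_simp; ring)
    have : (t / (1 + t)) • y₀ + (1 / (1 + t)) • ((-t) • y₀) = (0:E) := by
      rw [smul_smul]
      rw [← add_smul]
      have : t / (1 + t) + 1 / (1 + t) * -t = 0 := by field_simp; ring
      rw [this, zero_smul]
    rwa [this] at hcombo
  -- a sequence of unit vectors in M separating S from points near 0
  have hsep : ∀ k : ℕ, ∃ w : E, w ∈ M ∧ ‖w‖ = 1 ∧
      ∀ b ∈ S, -((1/(k+1:ℝ)) * ‖y₀‖) ≤ ⟪w, b⟫ := by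
    intro k
    have hkpos : (0:ℝ) < 1/(k+1:ℝ) := by positivity
    set x : E := (-(1/(k+1:ℝ))) • y₀ with hx
    have hxM : x ∈ M := M.smul_mem _ (Submodule.subset_span (intrinsicInterior_subset hy₀))
    have hxnorm : ‖x‖ = (1/(k+1:ℝ)) * ‖y₀‖ := by
      rw [hx, norm_smul, Real.norm_eq_abs, abs_neg, abs_of_pos hkpos]
    have hxcl : x ∉ closure S := by
      have := key (1/(k+1:ℝ)) hkpos
      simpa [hx] using this
    obtain ⟨f, u, hfx, hfb⟩ := geometric_hahn_banach_point_closed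
      (hS.closure) isClosed_closure hxcl
    set v : E := (InnerProductSpace.toDual ℝ E).symm f with hv
    have hvinner : ∀ z : E, ⟪v, z⟫ = f z := fun z => InnerProductSpace.toDual_symm_apply
    set p : E := (M.orthogonalProjectionOnto v : E) with hp
    have hpM : p ∈ M := (M.orthogonalProjectionOnto v).2
    have hinnerM : ∀ z ∈ M, ⟪p, z⟫ = ⟪v, z⟫ := by
      intro z hz
      have := M.starProjection_inner_eq_zero v z hz
      have h2 : ⟪v, z⟫ - ⟪p, z⟫ = 0 := by
        rw [← inner_sub_left]; exact this
      linarith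
    have hu0 : u < 0 := by
      have := hfb 0 (subset_closure h0)
      rwa [map_zero] at this
    have hpx : ⟪p, x⟫ < 0 := by
      rw [hinnerM x hxM, hvinner]; linarith
    have hpne : p ≠ 0 := by
      intro hzero
      rw [hzero, inner_zero_left] at hpx; linarith
    have hpnorm : (0:ℝ) < ‖p‖ := norm_pos_iff.mpr hpne
    refine ⟨‖p‖⁻¹ • p, M.smul_mem _ hpM, ?_, ?_⟩
    · rw [norm_smul]; simp [abs_of_pos (inv_pos.mpr hpnorm)]
      field_simp
    · intro b hb
      have hbM : b ∈ M := Submodule.subset_span hb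
      have h1 : ⟪p, b⟫ > ⟪p, x⟫ := by
        rw [hinnerM b hbM, hinnerM x hxM, hvinner, hvinner]
        have := hfb b (subset_closure hb)
        linarith
      have h2 : ⟪‖p‖⁻¹ • p, b⟫ ≥ ⟪‖p‖⁻¹ • p, x⟫ := by
        rw [real_inner_smul_left, real_inner_smul_left]
        apply mul_le_mul_of_nonneg_left h1.le (by positivity)
      have h3 : |⟪‖p‖⁻¹ • p, x⟫| ≤ ‖x‖ := by
        have := abs_real_inner_le_norm (‖p‖⁻¹ • p) x
        have hn : ‖‖p‖⁻¹ • p‖ = 1 := by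
          rw [norm_smul]; simp [abs_of_pos (inv_pos.mpr hpnorm)]; field_simp
        rw [hn, one_mul] at this; exact this
      have := neg_abs_le ⟪‖p‖⁻¹ • p, x⟫
      calc -((1/(k+1:ℝ)) * ‖y₀‖) = -‖x‖ := by rw [hxnorm]
        _ ≤ ⟪‖p‖⁻¹ • p, x⟫ := by linarith [h3, this]
        _ ≤ ⟪‖p‖⁻¹ • p, b⟫ := h2
  choose wseq hwM hwnorm hwsep using hsep
  -- extract a convergent subsequence
  have hsphere : ∀ k, wseq k ∈ Metric.sphere (0:E) 1 := by
    intro k; rw [mem_sphere_zero_iff_norm]; exact hwnorm k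
  obtain ⟨w, hwmem, φ, hφ, htend⟩ := (isCompact_sphere (0:E) 1).tendsto_subseq hsphere
  have hwnorm1 : ‖w‖ = 1 := mem_sphere_zero_iff_norm.mp hwmem
  have hwMfinal : w ∈ M := by
    apply hMclosed.mem_of_tendsto htend
    exact Filter.Eventually.of_forall (fun j => hwM (φ j))
  have hge : ∀ u ∈ S, 0 ≤ ⟪w, u⟫ := by
    intro u hu
    have htend2 : Filter.Tendsto (fun j => ⟪wseq (φ j), u⟫) Filter.atTop (nhds ⟪w, u⟫) :=
      Filter.Tendsto.inner htend tendsto_const_nhds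
    have htend3 : Filter.Tendsto (fun j => -((1/((φ j)+1:ℝ)) * ‖y₀‖)) Filter.atTop (nhds 0) := by
      have h1 : Filter.Tendsto (fun k : ℕ => (1/((k:ℝ)+1))) Filter.atTop (nhds 0) :=
        tendsto_one_div_add_atTop_nhds_zero_nat
      have h2 := (h1.comp hφ.tendsto_atTop).mul_const ‖y₀‖
      rw [zero_mul] at h2
      simpa using h2.neg
    exact le_of_tendsto_of_tendsto' htend3 htend2 (fun j => hwsep (φ j) u hu)
  refine ⟨w, hge, ?_⟩
  by_contra hnone
  push_neg at hnone
  have hzero : ∀ u ∈ S, ⟪w, u⟫ = 0 := fun u hu => le_antisymm (hnone u hu) (hge u hu)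
  have hall : ∀ u ∈ M, ⟪w, u⟫ = 0 := by
    intro u hu
    induction hu using Submodule.span_induction with
    | mem z hz => exact hzero z hz
    | zero => exact inner_zero_right w
    | add z₁ z₂ _ _ h1 h2 => rw [inner_add_right, h1, h2, add_zero]
    | smul a z _ h1 => rw [real_inner_smul_right, h1, mul_zero]
  have : ⟪w, w⟫ = 0 := hall w hwMfinal
  rw [real_inner_self_eq_norm_sq, hwnorm1] at this
  norm_num at this

/-- **Characterization of weak feasibility.**
Let `K ⊆ ℝ^n` be a closed convex cone, `L ⊆ ℝ^n` a linear subspace and `c ∈ ℝ^n`.  Then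
`(K, L, c)` is weakly feasible (i.e. `K ∩ (L + c) ≠ ∅` but `(L + c) ∩ ri K = ∅`) if and
only if there exist `x ∈ K ∩ (L + c)` and `w ∈ (K* \ K^⊥) ∩ L^⊥` with `wᵀc = 0`. -/
theorem weakly_feasible_iff {n : ℕ}
    (K : Set (EuclideanSpace ℝ (Fin n))) (L : Submodule ℝ (EuclideanSpace ℝ (Fin n)))
    (c : EuclideanSpace ℝ (Fin n))
    (hKclosed : IsClosed K) (hKconv : Convex ℝ K) (hK0 : (0 : EuclideanSpace ℝ (Fin n)) ∈ K)
    (hKcone : ∀ x ∈ K, ∀ t : ℝ, 0 ≤ t → t • x ∈ K) :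
    ((K ∩ {x | x - c ∈ L}).Nonempty ∧ {x | x - c ∈ L} ∩ intrinsicInterior ℝ K = ∅) ↔
      ((∃ x, x ∈ K ∩ {x | x - c ∈ L}) ∧
        ∃ w, (∀ z ∈ K, 0 ≤ ⟪w, z⟫) ∧ ¬(∀ z ∈ K, ⟪w, z⟫ = (0 : ℝ)) ∧ w ∈ Lᗮ ∧
          ⟪w, c⟫ = (0 : ℝ)) := by
  have hAconv : Convex ℝ {x : EuclideanSpace ℝ (Fin n) | x - c ∈ L} := by
    intro u hu v hv a b ha hb hab
    simp only [Set.mem_setOf_eq] at *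
    have h1 : a • u + b • v - c = a • (u - c) + b • (v - c) + (a + b - 1) • c := by module
    rw [h1, hab]
    simp only [sub_self, zero_smul, add_zero]
    exact L.add_mem (L.smul_mem a hu) (L.smul_mem b hv)
  constructor
  · rintro ⟨⟨x₀, hx₀K, hx₀A⟩, hdis⟩
    refine ⟨⟨x₀, hx₀K, hx₀A⟩, ?_⟩
    set C : Set (EuclideanSpace ℝ (Fin n)) :=
      {u | ∃ k ∈ K, ∃ a ∈ {x : EuclideanSpace ℝ (Fin n) | x - c ∈ L}, u = k - a} with hC
    have hCconv : Convex ℝ C := by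
      rintro u ⟨k1, hk1, a1, ha1, rfl⟩ v ⟨k2, hk2, a2, ha2, rfl⟩ α β hα hβ hαβ
      exact ⟨α • k1 + β • k2, hKconv hk1 hk2 hα hβ hαβ,
        α • a1 + β • a2, hAconv ha1 ha2 hα hβ hαβ, by module⟩
    have h0C : (0 : EuclideanSpace ℝ (Fin n)) ∈ C := ⟨x₀, hx₀K, x₀, hx₀A, by simp⟩
    have hniC : (0 : EuclideanSpace ℝ (Fin n)) ∉ intrinsicInterior ℝ C := by
      intro h0ri
      obtain ⟨y₀, hy₀⟩ := Set.Nonempty.intrinsicInterior hKconv ⟨0, hK0⟩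
      have hd : y₀ - x₀ ∈ C := ⟨y₀, intrinsicInterior_subset hy₀, x₀, hx₀A, rfl⟩
      obtain ⟨t, ht, hmem⟩ := wf_extend h0C h0ri (Submodule.subset_span hd)
      obtain ⟨k1, hk1K, a1, ha1A, heq⟩ := hmem
      have h1t : (0:ℝ) < 1 + t := by linarith
      have h2 : k1 - a1 = t • x₀ - t • y₀ := by rw [← heq]; module
      have hk1eq : k1 = a1 + t • x₀ - t • y₀ := by
        rw [sub_eq_iff_eq_add.mp h2]; abel
      set p := (t/(1+t)) • y₀ + (1/(1+t)) • k1 with hp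
      have hpri : p ∈ intrinsicInterior ℝ K :=
        wf_combo hKconv hK0 hy₀ (subset_closure hk1K) (Submodule.subset_span hk1K)
          (by positivity) (by positivity) (by field_simp; ring)
      have hpc : p - c = (1/(1+t)) • (a1 - c) + (t/(1+t)) • (x₀ - c) := by
        rw [hp, hk1eq]
        match_scalars <;> (field_simp; try ring)
      have hpA : p ∈ {x : EuclideanSpace ℝ (Fin n) | x - c ∈ L} := by
        rw [Set.mem_setOf_eq, hpc]
        exact L.add_mem (L.smul_mem _ ha1A) (L.smul_mem _ hx₀A)
      have : p ∈ {x : EuclideanSpace ℝ (Fin n) | x - c ∈ L} ∩ intrinsicInterior ℝ K :=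
        ⟨hpA, hpri⟩
      rw [hdis] at this
      exact this
    obtain ⟨w, hw1, u, huC, hu0⟩ := wf_core hCconv h0C hniC
    have hL : ∀ l ∈ L, ⟪w, l⟫ = (0:ℝ) := by
      intro l hl
      have hs : ∀ s : ℝ, 0 ≤ ⟪w, x₀ - (x₀ + s • l)⟫ := by
        intro s
        refine hw1 _ ⟨x₀, hx₀K, x₀ + s • l, ?_, rfl⟩
        have h3 : (x₀ + s • l) - c = (x₀ - c) + s • l := by abel
        rw [Set.mem_setOf_eq, h3]
        exact L.add_mem hx₀A (L.smul_mem s hl)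
      have hs' : ∀ s : ℝ, 0 ≤ -(s * ⟪w, l⟫) := by
        intro s
        have := hs s
        have h4 : x₀ - (x₀ + s • l) = -(s • l) := by abel
        rwa [h4, inner_neg_right, real_inner_smul_right] at this
      have hp1 := hs' 1
      have hm1 := hs' (-1)
      rw [one_mul] at hp1
      rw [neg_one_mul, neg_neg] at hm1
      linarith
    have hgeK : ∀ k ∈ K, ⟪w, x₀⟫ ≤ ⟪w, k⟫ := by
      intro k hk
      have := hw1 (k - x₀) ⟨k, hk, x₀, hx₀A, rfl⟩
      rw [inner_sub_right] at this
      linarith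
    have hx₀le : ⟪w, x₀⟫ ≤ 0 := by
      have := hgeK 0 hK0
      rwa [inner_zero_right] at this
    have hwstar : ∀ z ∈ K, 0 ≤ ⟪w, z⟫ := by
      intro z hz
      by_contra hneg
      push_neg at hneg
      set s : ℝ := (⟪w, x₀⟫ - 1) / ⟪w, z⟫ with hsdef
      have hspos : 0 < s := div_pos_of_neg_of_neg (by linarith) hneg
      have hsz : s • z ∈ K := hKcone z hz s hspos.le
      have := hgeK _ hsz
      rw [real_inner_smul_right, hsdef, div_mul_cancel₀ _ (ne_of_lt hneg)] at this
      linarith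
    have hwx₀c : ⟪w, x₀⟫ = ⟪w, c⟫ := by
      have := hL (x₀ - c) hx₀A
      rw [inner_sub_right] at this
      linarith
    have hwc0 : ⟪w, c⟫ = (0:ℝ) := by
      have := hwstar x₀ hx₀K
      linarith
    refine ⟨w, hwstar, ?_, ?_, hwc0⟩
    · intro hall
      obtain ⟨k, hkK, a, haA, rfl⟩ := huC
      have hwa : ⟪w, a⟫ = 0 := by
        have := hL (a - c) haA
        rw [inner_sub_right] at this
        linarith
      rw [inner_sub_right, hall k hkK, hwa] at hu0
      linarith
    · rw [Submodule.mem_orthogonal]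
      intro u hu
      rw [real_inner_comm]
      exact hL u hu
  · rintro ⟨⟨x, hxK, hxA⟩, w, hwstar, hwnz, hwL, hwc⟩
    refine ⟨⟨x, hxK, hxA⟩, ?_⟩
    rw [Set.eq_empty_iff_forall_notMem]
    rintro y ⟨hyA, hyri⟩
    push_neg at hwnz
    obtain ⟨z₀, hz₀K, hz₀⟩ := hwnz
    have hz₀pos : 0 < ⟪w, z₀⟫ := lt_of_le_of_ne (hwstar z₀ hz₀K) (Ne.symm hz₀)
    have hwy : ⟪w, y⟫ = 0 := by
      have h1 : ⟪y - c, w⟫ = (0:ℝ) := hwL (y - c) hyA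
      rw [real_inner_comm] at h1
      rw [inner_sub_right] at h1
      linarith [h1, hwc]
    obtain ⟨t, ht, hmem⟩ := wf_extend hK0 hyri (Submodule.subset_span hz₀K)
    have := hwstar _ hmem
    rw [inner_add_right, real_inner_smul_right, inner_sub_right] at this
    nlinarith
end
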